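/- arXiv:2302.10598 — 4 statements merged into one kernel-verified Lean document; each statement's English description precedes it below -/
import Mathlib

section
/- Fix α, β > 0 and s ≥ 0. Let v be an s-moderate weight on ℝ^{2d} and set ṽ(k,l) = v(αk, βl) for (k,l) ∈ ℤ^{2d}. Let 1 ≤ p_i, q_i < ∞ (1 ≤ i ≤ r) and 1 ≤ s₁, s₂ < ∞ satisfy 1/p₁ + ⋯ + 1/p_r = 1/s₁ and 1/q₁ + ⋯ + 1/q_r = 1/s₂. Suppose a : ℤ^{2d(r+1)} → ℂ, written a_{ij, m₁n₁, …, m_r n_r} with i,j,m_k,n_k ∈ ℤ^d, satisfies Σ |a_{ij, m₁n₁,…,m_rn_r}| ω_s(αi, βj) ∏_{k=1}^r ω_s(αm_k, βn_k) < ∞ (i.e. a belongs to the weighted space ℓ¹_{Ω̃_s}(ℤ^{2d(r+1)})). Then the multilinear operator 𝒪 defined by 𝒪(c¹,…,c^r)_{i,j} = Σ_{m₁,n₁,…,m_r,n_r ∈ ℤ^d} a_{ij,m₁n₁,…,m_rn_r} ∏_{k=1}^r c^k_{m_k, n_k} is bounded from ℓ_ṽ^{p₁,q₁} × ⋯ ×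 ℓ_ṽ^{p_r,q_r} into ℓ_ṽ^{s₁,s₂}: there is C > 0 with ‖𝒪(c¹,…,c^r)‖_{ℓ_ṽ^{s₁,s₂}} ≤ C ∏_{k=1}^r ‖c^k‖_{ℓ_ṽ^{p_k,q_k}}. -/
open MeasureTheory Complex
open scoped Real RealInnerProductSpace ENNReal

noncomputable section

/-- `ℝ^d` as a Euclidean space. -/
abbrev Ed (d : ℕ) := EuclideanSpace ℝ (Fin d)

/-- The lattice `ℤ^d`. -/
abbrev Zd (d : ℕ) := Fin d → ℤ

/-- The lattice point `αk ∈ ℝ^d` for `k ∈ ℤ^d`. -/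
def latE {d : ℕ} (α : ℝ) (k : Zd d) : Ed d :=
  (EuclideanSpace.equiv (Fin d) ℝ).symm fun i => α * (k i : ℝ)

/-- `ω_s(x,ξ) = (1+|x|²+|ξ|²)^{s/2}`. -/
def om {d : ℕ} (s : ℝ) (z : Ed d × Ed d) : ℝ := (1 + ‖z.1‖ ^ 2 + ‖z.2‖ ^ 2) ^ (s / 2)

/-- Weighted mixed-norm `‖c‖_{ℓ_w^{p,q}}` of a sequence on `ℤ^d × ℤ^d`
(first index inner), valued in `ℝ≥0∞`. -/
def seqNorm {d : ℕ} (p q : ℝ) (w : Zd d × Zd d → ℝ) (c : Zd d × Zd d → ℂ) : ℝ≥0∞ :=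
  (∑' l : Zd d, (∑' k : Zd d, ENNReal.ofReal (‖c (k, l)‖ * w (k, l)) ^ p) ^ (q / p)) ^ (1 / q)

private lemma ennreal_tsum_rpow_le {ι : Type*} (g : ι → ℝ≥0∞) {t : ℝ} (ht : 1 ≤ t) :
    ∑' i, g i ^ t ≤ (∑' i, g i) ^ t := by
  have ht0 : (0:ℝ) < t := lt_of_lt_of_le one_pos ht
  set T := ∑' i, g i with hT
  rcases eq_or_ne T ⊤ with h | h
  · rw [h, ENNReal.top_rpow_of_pos ht0]; exact le_top
  rcases eq_or_ne T 0 with h0 | h0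
  · have hg : ∀ i, g i = 0 := by
      intro i
      have h1 : g i ≤ T := ENNReal.le_tsum i
      rw [h0] at h1; simpa using h1
    simp [hg, ENNReal.zero_rpow_of_pos ht0]
  · have step : ∀ i, g i ^ t ≤ g i * T ^ (t - 1) := by
      intro i
      rcases eq_or_ne (g i) 0 with hgi | hgi
      · simp [hgi, ENNReal.zero_rpow_of_pos ht0]
      · have hle : g i ≤ T := ENNReal.le_tsum i
        have hgi' : g i ≠ ⊤ := ne_top_of_le_ne_top h hle
        have h1 : g i ^ t = g i ^ (1:ℝ) * g i ^ (t - 1) := by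
          rw [← ENNReal.rpow_add _ _ hgi hgi']; ring_nf
        rw [h1, ENNReal.rpow_one]
        exact mul_le_mul_right (ENNReal.rpow_le_rpow hle (by linarith)) _
    calc ∑' i, g i ^ t ≤ ∑' i, g i * T ^ (t - 1) := ENNReal.tsum_le_tsum step
      _ = T * T ^ (t - 1) := by rw [ENNReal.tsum_mul_right]
      _ = T ^ t := by
          rw [show t = 1 + (t - 1) by ring, ENNReal.rpow_add _ _ h0 h, ENNReal.rpow_one]
          ring_nf

private lemma mixed_le_l1 {d : ℕ} {p q : ℝ} (hp : 1 ≤ p) (hq : 1 ≤ q)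
    (f : Zd d × Zd d → ℝ≥0∞) :
    (∑' l : Zd d, (∑' k : Zd d, f (k, l) ^ p) ^ (q / p)) ^ (1 / q) ≤ ∑' x, f x := by
  have hp0 : (0:ℝ) < p := lt_of_lt_of_le one_pos hp
  have hq0 : (0:ℝ) < q := lt_of_lt_of_le one_pos hq
  have h1 : ∀ l : Zd d, (∑' k : Zd d, f (k, l) ^ p) ^ (q / p) ≤ (∑' k : Zd d, f (k, l)) ^ q := by
    intro l
    calc (∑' k : Zd d, f (k, l) ^ p) ^ (q / p)
        ≤ ((∑' k : Zd d, f (k, l)) ^ p) ^ (q / p) :=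
          ENNReal.rpow_le_rpow (ennreal_tsum_rpow_le _ hp) (by positivity)
      _ = (∑' k : Zd d, f (k, l)) ^ q := by
          rw [← ENNReal.rpow_mul]; congr 1; field_simp
  calc (∑' l : Zd d, (∑' k : Zd d, f (k, l) ^ p) ^ (q / p)) ^ (1 / q)
      ≤ (∑' l : Zd d, (∑' k : Zd d, f (k, l)) ^ q) ^ (1 / q) :=
        ENNReal.rpow_le_rpow (ENNReal.tsum_le_tsum h1) (by positivity)
    _ ≤ ((∑' l : Zd d, ∑' k : Zd d, f (k, l)) ^ q) ^ (1 / q) :=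
        ENNReal.rpow_le_rpow (ennreal_tsum_rpow_le _ hq) (by positivity)
    _ = ∑' l : Zd d, ∑' k : Zd d, f (k, l) := by
        rw [← ENNReal.rpow_mul, mul_one_div, div_self hq0.ne', ENNReal.rpow_one]
    _ = ∑' x : Zd d × Zd d, f x := by
        rw [ENNReal.tsum_comm, ← ENNReal.tsum_prod']

private lemma entry_le_mixed {d : ℕ} {p q : ℝ} (hp : 0 < p) (hq : 0 < q)
    (E : Zd d × Zd d → ℝ≥0∞) (k0 l0 : Zd d) :
    E (k0, l0) ≤ (∑' l : Zd d, (∑' k : Zd d, E (k, l) ^ p) ^ (q / p)) ^ (1 / q) := by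
  have h1 : E (k0, l0) ^ p ≤ ∑' k : Zd d, E (k, l0) ^ p :=
    ENNReal.le_tsum (f := fun k : Zd d => E (k, l0) ^ p) k0
  have h2 : E (k0, l0) ^ q ≤ (∑' k : Zd d, E (k, l0) ^ p) ^ (q / p) := by
    calc E (k0, l0) ^ q = (E (k0, l0) ^ p) ^ (q / p) := by
          rw [← ENNReal.rpow_mul]; congr 1; field_simp
      _ ≤ _ := ENNReal.rpow_le_rpow h1 (by positivity)
  have h3 : E (k0, l0) ^ q ≤ ∑' l : Zd d, (∑' k : Zd d, E (k, l) ^ p) ^ (q / p) :=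
    h2.trans (ENNReal.le_tsum (f := fun l : Zd d => (∑' k : Zd d, E (k, l) ^ p) ^ (q / p)) l0)
  calc E (k0, l0) = (E (k0, l0) ^ q) ^ (1 / q) := by
        rw [← ENNReal.rpow_mul, mul_one_div, div_self hq.ne', ENNReal.rpow_one]
    _ ≤ _ := ENNReal.rpow_le_rpow h3 (by positivity)

private lemma mixed_mul_const {d : ℕ} {p q : ℝ} (hp : 0 < p) (hq : 0 < q)
    (B : Zd d × Zd d → ℝ≥0∞) (M : ℝ≥0∞) :
    (∑' l : Zd d, (∑' k : Zd d, (B (k, l) * M) ^ p) ^ (q / p)) ^ (1 / q)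
      = (∑' l : Zd d, (∑' k : Zd d, B (k, l) ^ p) ^ (q / p)) ^ (1 / q) * M := by
  have e1 : ∀ l : Zd d, (∑' k : Zd d, (B (k, l) * M) ^ p) ^ (q / p)
      = (∑' k : Zd d, B (k, l) ^ p) ^ (q / p) * M ^ q := by
    intro l
    have h : ∀ k : Zd d, (B (k, l) * M) ^ p = B (k, l) ^ p * M ^ p := fun k =>
      ENNReal.mul_rpow_of_nonneg _ _ hp.le
    rw [tsum_congr h, ENNReal.tsum_mul_right,
      ENNReal.mul_rpow_of_nonneg _ _ (by positivity), ← ENNReal.rpow_mul]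
    congr 2
    field_simp
  rw [tsum_congr e1, ENNReal.tsum_mul_right,
    ENNReal.mul_rpow_of_nonneg _ _ (by positivity), ← ENNReal.rpow_mul, mul_one_div,
    div_self hq.ne', ENNReal.rpow_one]

theorem multilinear_matrix_operator_bounded
    (d r : ℕ) (hd : 1 ≤ d) (hr : 1 ≤ r)
    (α β : ℝ) (hα : 0 < α) (hβ : 0 < β) (s : ℝ) (hs : 0 ≤ s)
    (v : Ed d × Ed d → ℝ) (hv_pos : ∀ z, 0 < v z) (hv_cont : Continuous v)
    (hv_symm : ∀ z, v (-z) = v z)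
    (hv_mod : ∃ C > 0, ∀ z w : Ed d × Ed d,
      v (z + w) ≤ C * (1 + ‖z.1‖ ^ 2 + ‖z.2‖ ^ 2) ^ (s / 2) * v w)
    (p q : Fin r → ℝ) (s₁ s₂ : ℝ)
    (hp : ∀ i, 1 ≤ p i) (hq : ∀ i, 1 ≤ q i) (hs₁ : 1 ≤ s₁) (hs₂ : 1 ≤ s₂)
    (hps : ∑ i, 1 / p i = 1 / s₁) (hqs : ∑ i, 1 / q i = 1 / s₂)
    (a : Zd d → Zd d → (Fin r → Zd d × Zd d) → ℂ)
    (ha : Summable fun x : (Zd d × Zd d) × (Fin r → Zd d × Zd d) =>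
      ‖a x.1.1 x.1.2 x.2‖ * om s (latE α x.1.1, latE β x.1.2) *
        ∏ k, om s (latE α (x.2 k).1, latE β (x.2 k).2)) :
    ∃ C > 0, ∀ c : Fin r → (Zd d × Zd d → ℂ),
      seqNorm s₁ s₂ (fun kl => v (latE α kl.1, latE β kl.2))
          (fun ij => ∑' mn : Fin r → Zd d × Zd d, a ij.1 ij.2 mn * ∏ k, c k (mn k))
        ≤ ENNReal.ofReal C *
          ∏ k, seqNorm (p k) (q k) (fun kl => v (latE α kl.1, latE β kl.2)) (c k) := by
  obtain ⟨Cv, hCv, hmod⟩ := hv_mod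
  have hv0 : (0:ℝ) < v 0 := hv_pos 0
  have hom_pos : ∀ z : Ed d × Ed d, 0 < om s z := by
    intro z; rw [om]; positivity
  have hupper : ∀ z : Ed d × Ed d, v z ≤ Cv * v 0 * om s z := by
    intro z
    have h := hmod z 0
    rw [add_zero] at h
    calc v z ≤ Cv * (1 + ‖z.1‖ ^ 2 + ‖z.2‖ ^ 2) ^ (s / 2) * v 0 := h
      _ = Cv * v 0 * om s z := by rw [om]; ring
  have hlower : ∀ z : Ed d × Ed d, 1 ≤ (Cv / v 0) * (om s z * v z) := by
    intro z
    have h := hmod z (-z)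
    rw [add_neg_cancel, hv_symm] at h
    rw [div_mul_eq_mul_div, le_div_iff₀ hv0, one_mul]
    calc v 0 ≤ Cv * (1 + ‖z.1‖ ^ 2 + ‖z.2‖ ^ 2) ^ (s / 2) * v z := h
      _ = Cv * (om s z * v z) := by rw [om]; ring
  set K : ℝ := Cv * v 0 * (Cv / v 0) ^ r with hK
  have hKpos : 0 < K := by positivity
  set Wf : (Zd d × Zd d) × (Fin r → Zd d × Zd d) → ℝ := fun x =>
    ‖a x.1.1 x.1.2 x.2‖ * om s (latE α x.1.1, latE β x.1.2) *
      ∏ k, om s (latE α (x.2 k).1, latE β (x.2 k).2) with hWf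
  have hWf0 : ∀ x, 0 ≤ Wf x := by
    intro x
    simp only [hWf]
    have h1 : (0:ℝ) ≤ om s (latE α x.1.1, latE β x.1.2) := (hom_pos _).le
    have h2 : (0:ℝ) ≤ ∏ k, om s (latE α (x.2 k).1, latE β (x.2 k).2) :=
      Finset.prod_nonneg fun k _ => (hom_pos _).le
    exact mul_nonneg (mul_nonneg (norm_nonneg _) h1) h2
  set A : ℝ := ∑' x, Wf x with hA
  have hA0 : (0:ℝ) ≤ A := tsum_nonneg hWf0
  refine ⟨K * A + 1, by positivity, ?_⟩
  intro c
  set M : ℝ≥0∞ := ∏ k, seqNorm (p k) (q k) (fun kl => v (latE α kl.1, latE β kl.2)) (c k)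
    with hM
  have hp0 : ∀ k, (0:ℝ) < p k := fun k => lt_of_lt_of_le one_pos (hp k)
  have hq0 : ∀ k, (0:ℝ) < q k := fun k => lt_of_lt_of_le one_pos (hq k)
  have hs₁0 : (0:ℝ) < s₁ := lt_of_lt_of_le one_pos hs₁
  have hs₂0 : (0:ℝ) < s₂ := lt_of_lt_of_le one_pos hs₂
  -- the key pointwise real inequality
  have key : ∀ (i j : Zd d) (mn : Fin r → Zd d × Zd d),
      ‖a i j mn‖ * (∏ k, ‖c k (mn k)‖) * v (latE α i, latE β j)
        ≤ K * Wf ((i, j), mn) *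
          ∏ k, (‖c k (mn k)‖ * v (latE α (mn k).1, latE β (mn k).2)) := by
    intro i j mn
    have h2 : ∏ k, ‖c k (mn k)‖
        ≤ ∏ k, ((Cv / v 0) * (om s (latE α (mn k).1, latE β (mn k).2) *
            (‖c k (mn k)‖ * v (latE α (mn k).1, latE β (mn k).2)))) := by
      refine Finset.prod_le_prod (fun k _ => norm_nonneg _) (fun k _ => ?_)
      have h1 := hlower (latE α (mn k).1, latE β (mn k).2)
      have hc : (0:ℝ) ≤ ‖c k (mn k)‖ := norm_nonneg _
      have h3 := mul_le_mul_of_nonneg_right h1 hc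
      calc ‖c k (mn k)‖ = 1 * ‖c k (mn k)‖ := (one_mul _).symm
        _ ≤ (Cv / v 0) * (om s (latE α (mn k).1, latE β (mn k).2) *
              v (latE α (mn k).1, latE β (mn k).2)) * ‖c k (mn k)‖ := h3
        _ = (Cv / v 0) * (om s (latE α (mn k).1, latE β (mn k).2) *
              (‖c k (mn k)‖ * v (latE α (mn k).1, latE β (mn k).2))) := by ring
    have h1' : v (latE α i, latE β j) ≤ Cv * v 0 * om s (latE α i, latE β j) := hupper _
    have hprodnn : (0:ℝ) ≤ ∏ k, ((Cv / v 0) * (om s (latE α (mn k).1, latE β (mn k).2) *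
        (‖c k (mn k)‖ * v (latE α (mn k).1, latE β (mn k).2)))) := by
      refine Finset.prod_nonneg fun k _ => ?_
      have := (hom_pos (latE α (mn k).1, latE β (mn k).2)).le
      have := (hv_pos (latE α (mn k).1, latE β (mn k).2)).le
      positivity
    have h3 : (∏ k, ‖c k (mn k)‖) * v (latE α i, latE β j)
        ≤ (∏ k, ((Cv / v 0) * (om s (latE α (mn k).1, latE β (mn k).2) *
            (‖c k (mn k)‖ * v (latE α (mn k).1, latE β (mn k).2))))) *
          (Cv * v 0 * om s (latE α i, latE β j)) :=
      mul_le_mul h2 h1' (hv_pos _).le hprodnn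
    have prodeq : ∏ k, ((Cv / v 0) * (om s (latE α (mn k).1, latE β (mn k).2) *
          (‖c k (mn k)‖ * v (latE α (mn k).1, latE β (mn k).2))))
        = (Cv / v 0) ^ r * ((∏ k, om s (latE α (mn k).1, latE β (mn k).2)) *
            ∏ k, (‖c k (mn k)‖ * v (latE α (mn k).1, latE β (mn k).2))) := by
      rw [Finset.prod_mul_distrib, Finset.prod_mul_distrib, Finset.prod_const,
        Finset.card_univ, Fintype.card_fin]
    calc ‖a i j mn‖ * (∏ k, ‖c k (mn k)‖) * v (latE α i, latE β j)
        = ‖a i j mn‖ * ((∏ k, ‖c k (mn k)‖) * v (latE α i, latE β j)) := by ring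
      _ ≤ ‖a i j mn‖ * ((∏ k, ((Cv / v 0) * (om s (latE α (mn k).1, latE β (mn k).2) *
            (‖c k (mn k)‖ * v (latE α (mn k).1, latE β (mn k).2))))) *
            (Cv * v 0 * om s (latE α i, latE β j))) :=
          mul_le_mul_of_nonneg_left h3 (norm_nonneg _)
      _ = K * Wf ((i, j), mn) *
            ∏ k, (‖c k (mn k)‖ * v (latE α (mn k).1, latE β (mn k).2)) := by
          rw [prodeq, hK, hWf]
          ring
  -- per-term ENNReal bound
  have hterm : ∀ (i j : Zd d) (mn : Fin r → Zd d × Zd d),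
      ENNReal.ofReal (‖a i j mn * ∏ k, c k (mn k)‖ * v (latE α i, latE β j))
        ≤ ENNReal.ofReal (K * Wf ((i, j), mn)) * M := by
    intro i j mn
    calc ENNReal.ofReal (‖a i j mn * ∏ k, c k (mn k)‖ * v (latE α i, latE β j))
        ≤ ENNReal.ofReal (K * Wf ((i, j), mn) *
            ∏ k, (‖c k (mn k)‖ * v (latE α (mn k).1, latE β (mn k).2))) := by
          refine ENNReal.ofReal_le_ofReal ?_
          rw [norm_mul, norm_prod]
          exact key i j mn
      _ = ENNReal.ofReal (K * Wf ((i, j), mn)) *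
            ∏ k, ENNReal.ofReal (‖c k (mn k)‖ * v (latE α (mn k).1, latE β (mn k).2)) := by
          rw [ENNReal.ofReal_mul (mul_nonneg hKpos.le (hWf0 _)),
            ENNReal.ofReal_prod_of_nonneg
              (fun k _ => mul_nonneg (norm_nonneg _) (hv_pos _).le)]
      _ ≤ ENNReal.ofReal (K * Wf ((i, j), mn)) * M := by
          refine mul_le_mul_right ?_ _
          rw [hM]
          refine Finset.prod_le_prod' fun k _ => ?_
          exact entry_le_mixed (hp0 k) (hq0 k)
            (fun kl => ENNReal.ofReal (‖c k kl‖ * v (latE α kl.1, latE β kl.2)))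
            (mn k).1 (mn k).2
  set B : Zd d × Zd d → ℝ≥0∞ := fun ij =>
    ∑' mn : Fin r → Zd d × Zd d, ENNReal.ofReal (K * Wf (ij, mn)) with hB
  -- per-entry bound
  have hij : ∀ i j : Zd d,
      ENNReal.ofReal (‖∑' mn : Fin r → Zd d × Zd d, a i j mn * ∏ k, c k (mn k)‖ *
          v (latE α i, latE β j))
        ≤ B (i, j) * M := by
    intro i j
    by_cases hF : Summable fun mn : Fin r → Zd d × Zd d => a i j mn * ∏ k, c k (mn k)
    · have hnorm : Summable fun mn : Fin r → Zd d × Zd d => ‖a i j mn * ∏ k, c k (mn k)‖ :=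
        summable_norm_iff.mpr hF
      calc ENNReal.ofReal (‖∑' mn : Fin r → Zd d × Zd d, a i j mn * ∏ k, c k (mn k)‖ *
              v (latE α i, latE β j))
          ≤ ENNReal.ofReal ((∑' mn : Fin r → Zd d × Zd d, ‖a i j mn * ∏ k, c k (mn k)‖) *
              v (latE α i, latE β j)) :=
            ENNReal.ofReal_le_ofReal (mul_le_mul_of_nonneg_right
              (norm_tsum_le_tsum_norm hnorm) (hv_pos _).le)
        _ = ENNReal.ofReal (∑' mn : Fin r → Zd d × Zd d,
              ‖a i j mn * ∏ k, c k (mn k)‖ * v (latE α i, latE β j)) := by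
            rw [tsum_mul_right]
        _ = ∑' mn : Fin r → Zd d × Zd d, ENNReal.ofReal
              (‖a i j mn * ∏ k, c k (mn k)‖ * v (latE α i, latE β j)) :=
            ENNReal.ofReal_tsum_of_nonneg
              (fun mn => mul_nonneg (norm_nonneg _) (hv_pos _).le)
              (hnorm.mul_right _)
        _ ≤ ∑' mn : Fin r → Zd d × Zd d, ENNReal.ofReal (K * Wf ((i, j), mn)) * M :=
            ENNReal.tsum_le_tsum fun mn => hterm i j mn
        _ = B (i, j) * M := by rw [ENNReal.tsum_mul_right]
    · rw [tsum_eq_zero_of_not_summable hF]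
      simp
  -- assemble
  calc seqNorm s₁ s₂ (fun kl => v (latE α kl.1, latE β kl.2))
        (fun ij => ∑' mn : Fin r → Zd d × Zd d, a ij.1 ij.2 mn * ∏ k, c k (mn k))
      ≤ (∑' l : Zd d, (∑' k : Zd d, (B (k, l) * M) ^ s₁) ^ (s₂ / s₁)) ^ (1 / s₂) := by
        rw [seqNorm]
        refine ENNReal.rpow_le_rpow (ENNReal.tsum_le_tsum fun l =>
          ENNReal.rpow_le_rpow (ENNReal.tsum_le_tsum fun k =>
            ENNReal.rpow_le_rpow ?_ hs₁0.le) (by positivity)) (by positivity)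
        exact hij k l
    _ = (∑' l : Zd d, (∑' k : Zd d, B (k, l) ^ s₁) ^ (s₂ / s₁)) ^ (1 / s₂) * M :=
        mixed_mul_const hs₁0 hs₂0 B M
    _ ≤ (∑' x : Zd d × Zd d, B x) * M := mul_le_mul_left (mixed_le_l1 hs₁ hs₂ B) M
    _ = ENNReal.ofReal (K * A) * M := by
        have e1 : (∑' x : Zd d × Zd d, B x)
            = ∑' y : (Zd d × Zd d) × (Fin r → Zd d × Zd d), ENNReal.ofReal (K * Wf y) := by
          simp only [hB]
          exact (ENNReal.tsum_prod'
            (f := fun y : (Zd d × Zd d) × (Fin r → Zd d × Zd d) =>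
              ENNReal.ofReal (K * Wf y))).symm
        rw [e1, ← ENNReal.ofReal_tsum_of_nonneg
          (fun y => mul_nonneg hKpos.le (hWf0 y)) (ha.mul_left K), tsum_mul_left, hA]
    _ ≤ ENNReal.ofReal (K * A + 1) * M :=
        mul_le_mul_left (ENNReal.ofReal_le_ofReal (by linarith)) M
end
end

section
/- Fix α, β > 0 and let Λ = αℤ^d × βℤ^d. Let K = (K_{m',n',m,n,m₀,n₀}) be a complex array indexed by (m',n'), (m,n), (m₀,n₀) ∈ Λ, and define the bilinear operator (K(c,e))_{m',n'} = Σ_{m,n,m₀,n₀} K_{m',n',m,n,m₀,n₀} c_{m,n} e_{m₀,n₀}. If sup_{n} sup_{n₀} Σ_{n'} sup_{m'} Σ_{m} Σ_{m₀} |K_{m',n',m,n,m₀,n₀}| < ∞ (i.e. K ∈ ℓ^∞_n ℓ^∞_{n₀} ℓ¹_{n'} ℓ^∞_{m'} ℓ¹_m ℓ¹_{m₀}), then K is a continuous bilinear operator from ℓ¹_n ℓ^∞_m × ℓ¹_{n₀} ℓ^∞_{m₀} to ℓ¹_{n'} ℓ^∞_{m'}: there is C > 0 with Σ_{n'} sup_{m'}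 |(K(c,e))_{m',n'}| ≤ C (Σ_n sup_m |c_{m,n}|)(Σ_{n₀} sup_{m₀} |e_{m₀,n₀}|). -/
open scoped ENNReal

noncomputable section

lemma ofReal_norm_tsum_le {ι : Type*} (f : ι → ℂ) :
    ENNReal.ofReal ‖∑' i, f i‖ ≤ ∑' i, ENNReal.ofReal ‖f i‖ := by
  by_cases h : Summable f
  · have hn : Summable fun i => ‖f i‖ := summable_norm_iff.mpr h
    calc ENNReal.ofReal ‖∑' i, f i‖ ≤ ENNReal.ofReal (∑' i, ‖f i‖) :=
          ENNReal.ofReal_le_ofReal (norm_tsum_le_tsum_norm hn)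
      _ = ∑' i, ENNReal.ofReal ‖f i‖ :=
          ENNReal.ofReal_tsum_of_nonneg (fun i => norm_nonneg _) hn
  · rw [tsum_eq_zero_of_not_summable h]
    simp

theorem bilinear_matrix_l1linf_bounded
    (d : ℕ) (hd : 1 ≤ d) (α β : ℝ) (hα : 0 < α) (hβ : 0 < β)
    (K : Zd d → Zd d → Zd d → Zd d → Zd d → Zd d → ℂ)
    -- `K m' n' m n m₀ n₀`, with `K ∈ ℓ^∞_n ℓ^∞_{n₀} ℓ¹_{n'} ℓ^∞_{m'} ℓ¹_m ℓ¹_{m₀}` :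
    (hK : (⨆ n : Zd d, ⨆ n₀ : Zd d, ∑' n' : Zd d, ⨆ m' : Zd d,
        ∑' m : Zd d, ∑' m₀ : Zd d, ENNReal.ofReal ‖K m' n' m n m₀ n₀‖) < ⊤) :
    ∃ C > 0, ∀ c e : Zd d → Zd d → ℂ,
      (∑' n' : Zd d, ⨆ m' : Zd d, ENNReal.ofReal
          ‖∑' m : Zd d, ∑' n : Zd d, ∑' m₀ : Zd d, ∑' n₀ : Zd d,
              K m' n' m n m₀ n₀ * c m n * e m₀ n₀‖)
        ≤ ENNReal.ofReal C *
            ((∑' n : Zd d, ⨆ m : Zd d, ENNReal.ofReal ‖c m n‖) *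
              (∑' n₀ : Zd d, ⨆ m₀ : Zd d, ENNReal.ofReal ‖e m₀ n₀‖)) := by
  set S : ℝ≥0∞ := ⨆ n : Zd d, ⨆ n₀ : Zd d, ∑' n' : Zd d, ⨆ m' : Zd d,
      ∑' m : Zd d, ∑' m₀ : Zd d, ENNReal.ofReal ‖K m' n' m n m₀ n₀‖ with hSdef
  have hS : S ≠ ⊤ := hK.ne
  refine ⟨S.toReal + 1, by positivity, fun c e => ?_⟩
  have hSC : S ≤ ENNReal.ofReal (S.toReal + 1) := by
    rw [ENNReal.ofReal_add ENNReal.toReal_nonneg zero_le_one, ENNReal.ofReal_toReal hS]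
    exact le_self_add
  -- abbreviations
  set KN : Zd d → Zd d → Zd d → Zd d → Zd d → Zd d → ℝ≥0∞ :=
    fun m' n' m n m₀ n₀ => ENNReal.ofReal ‖K m' n' m n m₀ n₀‖ with hKN
  set cn : Zd d → ℝ≥0∞ := fun n => ⨆ m : Zd d, ENNReal.ofReal ‖c m n‖ with hcn
  set en : Zd d → ℝ≥0∞ := fun n₀ => ⨆ m₀ : Zd d, ENNReal.ofReal ‖e m₀ n₀‖ with hen
  -- Step 1: pointwise bound for each (n', m')
  have h1 : ∀ n' m', ENNReal.ofReal
      ‖∑' m : Zd d, ∑' n : Zd d, ∑' m₀ : Zd d, ∑' n₀ : Zd d,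
          K m' n' m n m₀ n₀ * c m n * e m₀ n₀‖
      ≤ ∑' n : Zd d, ∑' n₀ : Zd d, (cn n * en n₀) *
          (∑' m : Zd d, ∑' m₀ : Zd d, KN m' n' m n m₀ n₀) := by
    intro n' m'
    have step : ENNReal.ofReal
        ‖∑' m : Zd d, ∑' n : Zd d, ∑' m₀ : Zd d, ∑' n₀ : Zd d,
            K m' n' m n m₀ n₀ * c m n * e m₀ n₀‖
        ≤ ∑' m : Zd d, ∑' n : Zd d, ∑' m₀ : Zd d, ∑' n₀ : Zd d,
            KN m' n' m n m₀ n₀ * (cn n * en n₀) := by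
      refine le_trans (ofReal_norm_tsum_le _) (ENNReal.tsum_le_tsum fun m => ?_)
      refine le_trans (ofReal_norm_tsum_le _) (ENNReal.tsum_le_tsum fun n => ?_)
      refine le_trans (ofReal_norm_tsum_le _) (ENNReal.tsum_le_tsum fun m₀ => ?_)
      refine le_trans (ofReal_norm_tsum_le _) (ENNReal.tsum_le_tsum fun n₀ => ?_)
      rw [norm_mul, norm_mul, ENNReal.ofReal_mul (by positivity),
        ENNReal.ofReal_mul (norm_nonneg _)]
      rw [mul_assoc]
      exact mul_le_mul' le_rfl
        (mul_le_mul' (le_iSup (fun m => ENNReal.ofReal ‖c m n‖) m)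
          (le_iSup (fun m₀ => ENNReal.ofReal ‖e m₀ n₀‖) m₀))
    refine step.trans (le_of_eq ?_)
    -- rearrange the quadruple sum
    calc (∑' m : Zd d, ∑' n : Zd d, ∑' m₀ : Zd d, ∑' n₀ : Zd d,
            KN m' n' m n m₀ n₀ * (cn n * en n₀))
        = ∑' n : Zd d, ∑' m : Zd d, ∑' m₀ : Zd d, ∑' n₀ : Zd d,
            KN m' n' m n m₀ n₀ * (cn n * en n₀) := ENNReal.tsum_comm
      _ = ∑' n : Zd d, ∑' m : Zd d, ∑' n₀ : Zd d, ∑' m₀ : Zd d,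
            KN m' n' m n m₀ n₀ * (cn n * en n₀) :=
          tsum_congr fun n => tsum_congr fun m => ENNReal.tsum_comm
      _ = ∑' n : Zd d, ∑' n₀ : Zd d, ∑' m : Zd d, ∑' m₀ : Zd d,
            KN m' n' m n m₀ n₀ * (cn n * en n₀) :=
          tsum_congr fun n => ENNReal.tsum_comm
      _ = ∑' n : Zd d, ∑' n₀ : Zd d, (cn n * en n₀) *
            (∑' m : Zd d, ∑' m₀ : Zd d, KN m' n' m n m₀ n₀) := by
          refine tsum_congr fun n => tsum_congr fun n₀ => ?_
          rw [mul_comm]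
          rw [← ENNReal.tsum_mul_left]
          refine tsum_congr fun m => ?_
          rw [← ENNReal.tsum_mul_left]
          refine tsum_congr fun m₀ => ?_
          rw [mul_comm]
  -- Step 2: take sup over m' and sum over n'
  calc (∑' n' : Zd d, ⨆ m' : Zd d, ENNReal.ofReal
          ‖∑' m : Zd d, ∑' n : Zd d, ∑' m₀ : Zd d, ∑' n₀ : Zd d,
              K m' n' m n m₀ n₀ * c m n * e m₀ n₀‖)
      ≤ ∑' n' : Zd d, ∑' n : Zd d, ∑' n₀ : Zd d, (cn n * en n₀) *
          (⨆ m' : Zd d, ∑' m : Zd d, ∑' m₀ : Zd d, KN m' n' m n m₀ n₀) := by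
        refine ENNReal.tsum_le_tsum fun n' => iSup_le fun m' => (h1 n' m').trans ?_
        refine ENNReal.tsum_le_tsum fun n => ENNReal.tsum_le_tsum fun n₀ => ?_
        exact mul_le_mul' le_rfl
          (le_iSup (fun m' => ∑' m : Zd d, ∑' m₀ : Zd d, KN m' n' m n m₀ n₀) m')
    _ = ∑' n : Zd d, ∑' n₀ : Zd d, (cn n * en n₀) *
          (∑' n' : Zd d, ⨆ m' : Zd d, ∑' m : Zd d, ∑' m₀ : Zd d, KN m' n' m n m₀ n₀) := by
        rw [ENNReal.tsum_comm]
        refine tsum_congr fun n => ?_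
        rw [ENNReal.tsum_comm]
        refine tsum_congr fun n₀ => ?_
        rw [ENNReal.tsum_mul_left]
    _ ≤ ∑' n : Zd d, ∑' n₀ : Zd d, (cn n * en n₀) * S := by
        refine ENNReal.tsum_le_tsum fun n => ENNReal.tsum_le_tsum fun n₀ => ?_
        refine mul_le_mul' le_rfl ?_
        exact le_iSup₂ (f := fun n n₀ => ∑' n' : Zd d, ⨆ m' : Zd d,
          ∑' m : Zd d, ∑' m₀ : Zd d, KN m' n' m n m₀ n₀) n n₀
    _ = S * ((∑' n : Zd d, cn n) * (∑' n₀ : Zd d, en n₀)) := by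
        calc (∑' n : Zd d, ∑' n₀ : Zd d, (cn n * en n₀) * S)
            = ∑' n : Zd d, (S * cn n) * ∑' n₀ : Zd d, en n₀ := by
              refine tsum_congr fun n => ?_
              rw [← ENNReal.tsum_mul_left]
              exact tsum_congr fun n₀ => by ring
          _ = (S * ∑' n₀ : Zd d, en n₀) * ∑' n : Zd d, cn n := by
              rw [← ENNReal.tsum_mul_left]
              exact tsum_congr fun n => by ring
          _ = S * ((∑' n : Zd d, cn n) * (∑' n₀ : Zd d, en n₀)) := by ring
    _ ≤ ENNReal.ofReal (S.toReal + 1) *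
          ((∑' n : Zd d, cn n) * (∑' n₀ : Zd d, en n₀)) :=
        mul_le_mul' hSC le_rfl
end
end

section
/- Fix α, β > 0 and let Λ = αℤ^d × βℤ^d. Let K = (K_{m',n',m,n,m₀,n₀}) be a complex array indexed by (m',n'), (m,n), (m₀,n₀) ∈ Λ, and define (K(c,e))_{m',n'} = Σ_{m,n,m₀,n₀} K_{m',n',m,n,m₀,n₀} c_{m,n} e_{m₀,n₀}. If sup_{n'} Σ_{n₀} Σ_{n} sup_{m} sup_{m₀} Σ_{m'} |K_{m',n',m,n,m₀,n₀}| < ∞ (i.e. K ∈ ℓ^∞_{n'} ℓ¹_{n₀} ℓ¹_n ℓ^∞_m ℓ^∞_{m₀} ℓ¹_{m'}), then K is a continuous bilinear operator from ℓ^∞_n ℓ¹_m × ℓ^∞_{n₀} ℓ¹_{m₀} to ℓ^∞_{n'} ℓ¹_{m'}: there is C > 0 with sup_{n'} Σ_{m'} |(K(c,e))_{m',n'}| ≤ C (sup_n Σ_m |c_{m,n}|)(sup_{n₀} Σ_{m₀} |e_{m₀,n₀}|). -/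
open scoped ENNReal

noncomputable section

lemma tsum5_reorder {ι : Type*} (f : ι → ι → ι → ι → ι → ℝ≥0∞) :
    ∑' m', ∑' m, ∑' n, ∑' m₀, ∑' n₀, f m' m n m₀ n₀
      = ∑' n, ∑' m, ∑' n₀, ∑' m₀, ∑' m', f m' m n m₀ n₀ := by
  calc ∑' m', ∑' m, ∑' n, ∑' m₀, ∑' n₀, f m' m n m₀ n₀
      = ∑' m, ∑' m', ∑' n, ∑' m₀, ∑' n₀, f m' m n m₀ n₀ := ENNReal.tsum_comm
    _ = ∑' m, ∑' n, ∑' m', ∑' m₀, ∑' n₀, f m' m n m₀ n₀ :=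
        tsum_congr fun m => ENNReal.tsum_comm
    _ = ∑' n, ∑' m, ∑' m', ∑' m₀, ∑' n₀, f m' m n m₀ n₀ := ENNReal.tsum_comm
    _ = ∑' n, ∑' m, ∑' m₀, ∑' m', ∑' n₀, f m' m n m₀ n₀ :=
        tsum_congr fun n => tsum_congr fun m => ENNReal.tsum_comm
    _ = ∑' n, ∑' m, ∑' m₀, ∑' n₀, ∑' m', f m' m n m₀ n₀ :=
        tsum_congr fun n => tsum_congr fun m => tsum_congr fun m₀ => ENNReal.tsum_comm
    _ = ∑' n, ∑' m, ∑' n₀, ∑' m₀, ∑' m', f m' m n m₀ n₀ :=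
        tsum_congr fun n => tsum_congr fun m => ENNReal.tsum_comm

theorem bilinear_matrix_linfl1_bounded
    (d : ℕ) (hd : 1 ≤ d) (α β : ℝ) (hα : 0 < α) (hβ : 0 < β)
    (K : Zd d → Zd d → Zd d → Zd d → Zd d → Zd d → ℂ)
    -- `K m' n' m n m₀ n₀`, with `K ∈ ℓ^∞_{n'} ℓ¹_{n₀} ℓ¹_n ℓ^∞_m ℓ^∞_{m₀} ℓ¹_{m'}` :
    (hK : (⨆ n' : Zd d, ∑' n₀ : Zd d, ∑' n : Zd d, ⨆ m : Zd d, ⨆ m₀ : Zd d,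
        ∑' m' : Zd d, ENNReal.ofReal ‖K m' n' m n m₀ n₀‖) < ⊤) :
    ∃ C > 0, ∀ c e : Zd d → Zd d → ℂ,
      (⨆ n' : Zd d, ∑' m' : Zd d, ENNReal.ofReal
          ‖∑' m : Zd d, ∑' n : Zd d, ∑' m₀ : Zd d, ∑' n₀ : Zd d,
              K m' n' m n m₀ n₀ * c m n * e m₀ n₀‖)
        ≤ ENNReal.ofReal C *
            ((⨆ n : Zd d, ∑' m : Zd d, ENNReal.ofReal ‖c m n‖) *
              (⨆ n₀ : Zd d, ∑' m₀ : Zd d, ENNReal.ofReal ‖e m₀ n₀‖)) := by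
  classical
  set M : ℝ≥0∞ := ⨆ n' : Zd d, ∑' n₀ : Zd d, ∑' n : Zd d, ⨆ m : Zd d, ⨆ m₀ : Zd d,
      ∑' m' : Zd d, ENNReal.ofReal ‖K m' n' m n m₀ n₀‖ with hMdef
  have hMtop : M ≠ ⊤ := hK.ne
  refine ⟨M.toReal + 1, by positivity, fun c e => ?_⟩
  set a : Zd d → Zd d → Zd d → Zd d → Zd d → Zd d → ℝ≥0∞ :=
    fun m' n' m n m₀ n₀ => ENNReal.ofReal ‖K m' n' m n m₀ n₀‖ with ha
  set cc : Zd d → Zd d → ℝ≥0∞ := fun m n => ENNReal.ofReal ‖c m n‖ with hcc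
  set ee : Zd d → Zd d → ℝ≥0∞ := fun m₀ n₀ => ENNReal.ofReal ‖e m₀ n₀‖ with hee
  set Sc : ℝ≥0∞ := ⨆ n : Zd d, ∑' m : Zd d, cc m n with hSc
  set Se : ℝ≥0∞ := ⨆ n₀ : Zd d, ∑' m₀ : Zd d, ee m₀ n₀ with hSe
  set A : Zd d → Zd d → Zd d → ℝ≥0∞ :=
    fun n' n n₀ => ⨆ m : Zd d, ⨆ m₀ : Zd d, ∑' m' : Zd d, a m' n' m n m₀ n₀ with hA
  have hMC : M ≤ ENNReal.ofReal (M.toReal + 1) := by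
    conv_lhs => rw [← ENNReal.ofReal_toReal hMtop]
    exact ENNReal.ofReal_le_ofReal (by linarith)
  apply iSup_le
  intro n'
  have hterm : ∀ m' m n m₀ n₀ : Zd d,
      ENNReal.ofReal ‖K m' n' m n m₀ n₀ * c m n * e m₀ n₀‖
        = a m' n' m n m₀ n₀ * cc m n * ee m₀ n₀ := by
    intro m' m n m₀ n₀
    rw [norm_mul, norm_mul, ENNReal.ofReal_mul (by positivity),
      ENNReal.ofReal_mul (norm_nonneg _)]
  calc ∑' m' : Zd d, ENNReal.ofReal
          ‖∑' m : Zd d, ∑' n : Zd d, ∑' m₀ : Zd d, ∑' n₀ : Zd d,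
              K m' n' m n m₀ n₀ * c m n * e m₀ n₀‖
      ≤ ∑' m', ∑' m, ∑' n, ∑' m₀, ∑' n₀,
          ENNReal.ofReal ‖K m' n' m n m₀ n₀ * c m n * e m₀ n₀‖ := by
        refine ENNReal.tsum_le_tsum fun m' => ?_
        calc ENNReal.ofReal ‖∑' m, ∑' n, ∑' m₀, ∑' n₀,
                K m' n' m n m₀ n₀ * c m n * e m₀ n₀‖
            ≤ ∑' m, ENNReal.ofReal ‖∑' n, ∑' m₀, ∑' n₀,
                K m' n' m n m₀ n₀ * c m n * e m₀ n₀‖ := ofReal_norm_tsum_le _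
          _ ≤ ∑' m, ∑' n, ENNReal.ofReal ‖∑' m₀, ∑' n₀,
                K m' n' m n m₀ n₀ * c m n * e m₀ n₀‖ :=
              ENNReal.tsum_le_tsum fun m => ofReal_norm_tsum_le _
          _ ≤ ∑' m, ∑' n, ∑' m₀, ENNReal.ofReal ‖∑' n₀,
                K m' n' m n m₀ n₀ * c m n * e m₀ n₀‖ :=
              ENNReal.tsum_le_tsum fun m => ENNReal.tsum_le_tsum fun n =>
                ofReal_norm_tsum_le _
          _ ≤ ∑' m, ∑' n, ∑' m₀, ∑' n₀, ENNReal.ofReal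
                ‖K m' n' m n m₀ n₀ * c m n * e m₀ n₀‖ :=
              ENNReal.tsum_le_tsum fun m => ENNReal.tsum_le_tsum fun n =>
                ENNReal.tsum_le_tsum fun m₀ => ofReal_norm_tsum_le _
    _ = ∑' m', ∑' m, ∑' n, ∑' m₀, ∑' n₀,
          a m' n' m n m₀ n₀ * cc m n * ee m₀ n₀ := by
        simp only [hterm]
    _ = ∑' n, ∑' m, ∑' n₀, ∑' m₀, ∑' m',
          a m' n' m n m₀ n₀ * cc m n * ee m₀ n₀ :=
        tsum5_reorder fun m' m n m₀ n₀ => a m' n' m n m₀ n₀ * cc m n * ee m₀ n₀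
    _ = ∑' n, ∑' m, ∑' n₀, ∑' m₀,
          (∑' m', a m' n' m n m₀ n₀) * cc m n * ee m₀ n₀ := by
        refine tsum_congr fun n => tsum_congr fun m => tsum_congr fun n₀ =>
          tsum_congr fun m₀ => ?_
        rw [ENNReal.tsum_mul_right, ENNReal.tsum_mul_right]
    _ ≤ ∑' n, ∑' m, ∑' n₀, ∑' m₀, A n' n n₀ * cc m n * ee m₀ n₀ := by
        refine ENNReal.tsum_le_tsum fun n => ENNReal.tsum_le_tsum fun m =>
          ENNReal.tsum_le_tsum fun n₀ => ENNReal.tsum_le_tsum fun m₀ => ?_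
        gcongr
        exact le_iSup₂ (f := fun m m₀ => ∑' m', a m' n' m n m₀ n₀) m m₀
    _ = ∑' n, ∑' m, ∑' n₀, A n' n n₀ * cc m n * (∑' m₀, ee m₀ n₀) := by
        refine tsum_congr fun n => tsum_congr fun m => tsum_congr fun n₀ => ?_
        exact ENNReal.tsum_mul_left
    _ ≤ ∑' n, ∑' m, ∑' n₀, A n' n n₀ * cc m n * Se := by
        refine ENNReal.tsum_le_tsum fun n => ENNReal.tsum_le_tsum fun m =>
          ENNReal.tsum_le_tsum fun n₀ => ?_
        gcongr
        exact le_iSup (fun n₀ => ∑' m₀, ee m₀ n₀) n₀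
    _ = ∑' n, ∑' m, cc m n * Se * ∑' n₀, A n' n n₀ := by
        refine tsum_congr fun n => tsum_congr fun m => ?_
        rw [← ENNReal.tsum_mul_left]
        exact tsum_congr fun n₀ => by ring
    _ = ∑' n, (∑' m, cc m n) * (Se * ∑' n₀, A n' n n₀) := by
        refine tsum_congr fun n => ?_
        rw [← ENNReal.tsum_mul_right]
        exact tsum_congr fun m => by ring
    _ ≤ ∑' n, Sc * (Se * ∑' n₀, A n' n n₀) := by
        refine ENNReal.tsum_le_tsum fun n => ?_
        gcongr
        exact le_iSup (fun n => ∑' m, cc m n) n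
    _ = Sc * Se * ∑' n, ∑' n₀, A n' n n₀ := by
        rw [ENNReal.tsum_mul_left, ENNReal.tsum_mul_left, mul_assoc]
    _ = Sc * Se * ∑' n₀, ∑' n, A n' n n₀ := by rw [ENNReal.tsum_comm]
    _ ≤ Sc * Se * M := by
        gcongr
        exact le_iSup (fun n' => ∑' n₀, ∑' n, A n' n n₀) n'
    _ ≤ ENNReal.ofReal (M.toReal + 1) * (Sc * Se) := by
        rw [mul_comm]
        gcongr
end
end

section
/- Fix α, β > 0 and let Λ = αℤ^d × βℤ^d. Let K = (K_{m',n',m,n,m₀,n₀}) be a complex array indexed by (m',n'), (m,n), (m₀,n₀) ∈ Λ, and define (K(c,e))_{m',n'} = Σ_{m,n,m₀,n₀} K_{m',n',m,n,m₀,n₀} c_{m,n} e_{m₀,n₀}. Suppose all four of the following are finite: (a) sup_n sup_{n₀} Σ_{n'} sup_{m'} Σ_m Σ_{m₀} |K|; (b) sup_{n'} Σ_n Σ_{n₀} sup_m sup_{m₀} Σ_{m'} |K|; (c) sup_{n'} sup_{m'} Σ_n Σ_m Σ_{n₀} Σ_{m₀} |K|; (d) sup_n sup_m sup_{n₀} sup_{m₀}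 Σ_{n'} Σ_{m'} |K|. Then for every 1 ≤ p, q ≤ ∞, K is a continuous bilinear operator from ℓ^{p,q} × ℓ^{p,q} to ℓ^{p,q}: there is C > 0 (independent of p, q) with ‖K(c,e)‖_{ℓ^{p,q}} ≤ C ‖c‖_{ℓ^{p,q}} ‖e‖_{ℓ^{p,q}}. -/
open scoped ENNReal

noncomputable section

/-- `ℓ^p`-type norm (sup at `p = ∞`, sum otherwise) of an `ℝ≥0∞`-valued sequence. -/
def lpS {d : ℕ} (p : ℝ≥0∞) (f : Zd d → ℝ≥0∞) : ℝ≥0∞ :=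
  if p = ⊤ then ⨆ k, f k else (∑' k, f k ^ p.toReal) ^ (1 / p.toReal)

/-- Mixed norm `‖c‖_{ℓ^{p,q}} = ‖c‖_{ℓ^q_n ℓ^p_m}` of `c = (c_{m,n})`. -/
def lpq {d : ℕ} (p q : ℝ≥0∞) (c : Zd d → Zd d → ℂ) : ℝ≥0∞ :=
  lpS q fun n => lpS p fun m => ENNReal.ofReal ‖c m n‖

section AuxiliaryHolder
open ENNReal
variable {ι : Type*}

lemma tsum_holder (f g : ι → ℝ≥0∞) {t : ℝ} (ht0 : 0 ≤ t) (ht1 : t ≤ 1) :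
    ∑' i, f i ^ t * g i ^ (1 - t) ≤ (∑' i, f i) ^ t * (∑' i, g i) ^ (1 - t) := by
  rcases eq_or_lt_of_le ht0 with h0 | h0
  · simp [← h0]
  rcases eq_or_lt_of_le ht1 with h1 | h1
  · simp [h1]
  have hconj : (t⁻¹).HolderConjugate (1 - t)⁻¹ := Real.HolderConjugate.inv_one_sub_inv h0 h1
  rw [ENNReal.tsum_eq_iSup_sum]
  apply iSup_le; intro s
  have key := ENNReal.inner_le_Lp_mul_Lq s (fun i => f i ^ t) (fun i => g i ^ (1 - t)) hconj
  have e1 : ∀ i, (f i ^ t) ^ t⁻¹ = f i := by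
    intro i; rw [← ENNReal.rpow_mul, mul_inv_cancel₀ h0.ne']; exact ENNReal.rpow_one _
  have e2 : ∀ i, (g i ^ (1 - t)) ^ (1 - t)⁻¹ = g i := by
    intro i; rw [← ENNReal.rpow_mul, mul_inv_cancel₀ (by linarith : (1 : ℝ) - t ≠ 0)]
    exact ENNReal.rpow_one _
  simp only [e1, e2, one_div, inv_inv] at key
  refine key.trans ?_
  refine mul_le_mul' (ENNReal.rpow_le_rpow (ENNReal.sum_le_tsum s) ht0) (ENNReal.rpow_le_rpow (ENNReal.sum_le_tsum s) (by linarith))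

lemma tsum_holder_w (k f g : ι → ℝ≥0∞) {t : ℝ} (ht0 : 0 ≤ t) (ht1 : t ≤ 1) :
    ∑' i, k i * (f i ^ t * g i ^ (1 - t))
      ≤ (∑' i, k i * f i) ^ t * (∑' i, k i * g i) ^ (1 - t) := by
  have h : ∀ i, k i * (f i ^ t * g i ^ (1 - t)) = (k i * f i) ^ t * (k i * g i) ^ (1 - t) := by
    intro i
    rw [ENNReal.mul_rpow_of_nonneg _ _ ht0, ENNReal.mul_rpow_of_nonneg _ _ (by linarith : (0:ℝ) ≤ 1 - t)]
    have : k i ^ t * k i ^ (1 - t) = k i := by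
      rw [← ENNReal.rpow_add_of_nonneg _ _ ht0 (by linarith)]
      simp
    calc k i * (f i ^ t * g i ^ (1 - t)) = (k i ^ t * k i ^ (1-t)) * (f i ^ t * g i ^ (1 - t)) := by rw [this]
    _ = k i ^ t * f i ^ t * (k i ^ (1 - t) * g i ^ (1 - t)) := by ring
  simp only [h]
  exact tsum_holder _ _ ht0 ht1

lemma tsum_holder4_w (k f1 f2 f3 f4 : ι → ℝ≥0∞) {t1 t2 t3 t4 : ℝ}
    (h1 : 0 ≤ t1) (h2 : 0 ≤ t2) (h3 : 0 ≤ t3) (h4 : 0 ≤ t4) (hsum : t1 + t2 + t3 + t4 = 1) :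
    ∑' i, k i * (f1 i ^ t1 * f2 i ^ t2 * f3 i ^ t3 * f4 i ^ t4)
      ≤ (∑' i, k i * f1 i) ^ t1 * (∑' i, k i * f2 i) ^ t2 *
        (∑' i, k i * f3 i) ^ t3 * (∑' i, k i * f4 i) ^ t4 := by
  set s := t1 + t2 with hs
  have hs0 : 0 ≤ s := by positivity
  have hs1 : s ≤ 1 := by linarith
  rcases eq_or_lt_of_le hs0 with hz | hsp
  · -- s = 0 : t1 = t2 = 0
    have ht1z : t1 = 0 := by linarith [hz ▸ hs]
    have ht2z : t2 = 0 := by linarith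
    have ht34 : t3 + t4 = 1 := by linarith
    simp only [ht1z, ht2z, ENNReal.rpow_zero, one_mul]
    have := tsum_holder_w k f3 f4 h3 (by linarith : t3 ≤ 1)
    rw [show (1 : ℝ) - t3 = t4 by linarith] at this
    exact this
  rcases eq_or_lt_of_le hs1 with ho | hso
  · -- s = 1 : t3 = t4 = 0
    have ht3z : t3 = 0 := by linarith
    have ht4z : t4 = 0 := by linarith
    simp only [ht3z, ht4z, ENNReal.rpow_zero, mul_one]
    have := tsum_holder_w k f1 f2 h1 (by linarith : t1 ≤ 1)
    rw [show (1 : ℝ) - t1 = t2 by linarith] at this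
    exact this
  -- 0 < s < 1
  have key : ∀ i, k i * (f1 i ^ t1 * f2 i ^ t2 * f3 i ^ t3 * f4 i ^ t4)
      = k i * ((f1 i ^ (t1/s) * f2 i ^ (t2/s)) ^ s * (f3 i ^ (t3/(1-s)) * f4 i ^ (t4/(1-s))) ^ (1 - s)) := by
    intro i
    rw [ENNReal.mul_rpow_of_nonneg _ _ hs0, ENNReal.mul_rpow_of_nonneg _ _ (by linarith : (0:ℝ) ≤ 1 - s),
      ← ENNReal.rpow_mul, ← ENNReal.rpow_mul, ← ENNReal.rpow_mul, ← ENNReal.rpow_mul,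
      div_mul_cancel₀ _ hsp.ne', div_mul_cancel₀ _ hsp.ne',
      div_mul_cancel₀ _ (by linarith : (1:ℝ) - s ≠ 0), div_mul_cancel₀ _ (by linarith : (1:ℝ) - s ≠ 0)]
    ring
  have hs_ne : s ≠ 0 := hsp.ne'
  have h1s_ne : (1:ℝ) - s ≠ 0 := by linarith
  simp only [key]
  refine (tsum_holder_w k _ _ hs0 hs1).trans ?_
  have hA := tsum_holder_w k f1 f2 (div_nonneg h1 hs0) (by
    rw [div_le_one hsp]; linarith : t1 / s ≤ 1)
  rw [show (1:ℝ) - t1/s = t2/s by field_simp; linarith] at hA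
  have hB := tsum_holder_w k f3 f4 (div_nonneg h3 (by linarith)) (by
    rw [div_le_one (by linarith : (0:ℝ) < 1 - s)]; linarith : t3 / (1 - s) ≤ 1)
  rw [show (1:ℝ) - t3/(1-s) = t4/(1-s) by field_simp; linarith] at hB
  calc (∑' i, k i * (f1 i ^ (t1/s) * f2 i ^ (t2/s))) ^ s
        * (∑' i, k i * (f3 i ^ (t3/(1-s)) * f4 i ^ (t4/(1-s)))) ^ (1 - s)
      ≤ ((∑' i, k i * f1 i) ^ (t1/s) * (∑' i, k i * f2 i) ^ (t2/s)) ^ s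
        * ((∑' i, k i * f3 i) ^ (t3/(1-s)) * (∑' i, k i * f4 i) ^ (t4/(1-s))) ^ (1 - s) := by
        exact mul_le_mul' (ENNReal.rpow_le_rpow hA hs0) (ENNReal.rpow_le_rpow hB (by linarith))
    _ = (∑' i, k i * f1 i) ^ t1 * (∑' i, k i * f2 i) ^ t2 *
        (∑' i, k i * f3 i) ^ t3 * (∑' i, k i * f4 i) ^ t4 := by
        rw [ENNReal.mul_rpow_of_nonneg _ _ hs0, ENNReal.mul_rpow_of_nonneg _ _ (by linarith : (0:ℝ) ≤ 1 - s),
          ← ENNReal.rpow_mul, ← ENNReal.rpow_mul, ← ENNReal.rpow_mul, ← ENNReal.rpow_mul,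
          div_mul_cancel₀ _ hsp.ne', div_mul_cancel₀ _ hsp.ne',
          div_mul_cancel₀ _ (by linarith : (1:ℝ) - s ≠ 0), div_mul_cancel₀ _ (by linarith : (1:ℝ) - s ≠ 0)]
        ring

namespace BMX

variable {d : ℕ} {p q : ℝ≥0∞} {f g : Zd d → ℝ≥0∞} {c : ℝ≥0∞}

lemma mul_inv_le_one' (y : ℝ≥0∞) : y * y⁻¹ ≤ 1 := by
  by_cases h0 : y = 0
  · simp [h0]
  by_cases ht : y = ⊤
  · simp [ht]
  · rw [ENNReal.mul_inv_cancel h0 ht]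

lemma iSup_rpow {ι : Type*} [Nonempty ι] (f : ι → ℝ≥0∞) {s : ℝ} (hs : 0 < s) :
    (⨆ i, f i ^ s) = (⨆ i, f i) ^ s := by
  apply le_antisymm
  · exact iSup_le fun i => ENNReal.rpow_le_rpow (le_iSup f i) hs.le
  · have h : (⨆ i, f i) ≤ (⨆ i, f i ^ s) ^ (1/s) := by
      refine iSup_le fun i => ?_
      calc f i = (f i ^ s) ^ (1/s) := by
            rw [← ENNReal.rpow_mul, mul_one_div_cancel hs.ne', ENNReal.rpow_one]
      _ ≤ _ := ENNReal.rpow_le_rpow (le_iSup (fun i => f i ^ s) i) (by positivity)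
    calc (⨆ i, f i) ^ s ≤ ((⨆ i, f i ^ s) ^ (1/s)) ^ s := ENNReal.rpow_le_rpow h hs.le
    _ = ⨆ i, f i ^ s := by
        rw [← ENNReal.rpow_mul, one_div_mul_cancel hs.ne', ENNReal.rpow_one]

lemma four_pow_le {M wA wB wC wD : ℝ≥0∞} {tA tB tC tD : ℝ}
    (hA : wA ≤ M) (hB : wB ≤ M) (hC : wC ≤ M) (hD : wD ≤ M)
    (htA : 0 ≤ tA) (htB : 0 ≤ tB) (htC : 0 ≤ tC) (htD : 0 ≤ tD)
    (hsum : tA + tB + tC + tD = 1) :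
    wA ^ tA * wB ^ tB * wC ^ tC * wD ^ tD ≤ M := by
  calc wA ^ tA * wB ^ tB * wC ^ tC * wD ^ tD
      ≤ M ^ tA * M ^ tB * M ^ tC * M ^ tD := by
        exact mul_le_mul' (mul_le_mul' (mul_le_mul' (ENNReal.rpow_le_rpow hA htA)
          (ENNReal.rpow_le_rpow hB htB)) (ENNReal.rpow_le_rpow hC htC))
          (ENNReal.rpow_le_rpow hD htD)
    _ = M := by
        rw [← ENNReal.rpow_add_of_nonneg _ _ htA htB,
          ← ENNReal.rpow_add_of_nonneg _ _ (by positivity) htC,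
          ← ENNReal.rpow_add_of_nonneg _ _ (by positivity) htD, hsum, ENNReal.rpow_one]

lemma le_one_tri {M N1 N2 N3 : ℝ≥0∞} (h : N1 ≤ M) (h2 : N2 ≤ 1) (h3 : N3 ≤ 1) :
    N1 * N2 * N3 ≤ M := by
  calc N1 * N2 * N3 ≤ M * 1 * 1 := mul_le_mul' (mul_le_mul' h h2) h3
  _ = M := by simp

lemma lpS_top : lpS ⊤ f = ⨆ k, f k := if_pos rfl

lemma lpS_ne_top (hp : p ≠ ⊤) : lpS p f = (∑' k, f k ^ p.toReal) ^ (1 / p.toReal) := if_neg hp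

lemma one_le_toReal (h1 : 1 ≤ p) (hp : p ≠ ⊤) : 1 ≤ p.toReal := by
  rw [show (1:ℝ) = (1:ℝ≥0∞).toReal by simp]
  exact ENNReal.toReal_mono hp h1

lemma toReal_pos' (h1 : 1 ≤ p) (hp : p ≠ ⊤) : 0 < p.toReal :=
  lt_of_lt_of_le one_pos (one_le_toReal h1 hp)

lemma lpS_one : lpS 1 f = ∑' k, f k := by
  rw [lpS_ne_top one_ne_top]; simp

lemma lpS_mono (h : ∀ i, f i ≤ g i) : lpS p f ≤ lpS p g := by
  by_cases hp : p = ⊤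
  · subst hp; rw [lpS_top, lpS_top]; exact iSup_mono h
  · rw [lpS_ne_top hp, lpS_ne_top hp]
    refine ENNReal.rpow_le_rpow (ENNReal.tsum_le_tsum fun i => ?_) (by positivity)
    exact ENNReal.rpow_le_rpow (h i) ENNReal.toReal_nonneg

lemma lpS_const_mul (h1 : 1 ≤ p) : lpS p (fun i => c * f i) = c * lpS p f := by
  by_cases hp : p = ⊤
  · subst hp; rw [lpS_top, lpS_top]; exact (ENNReal.mul_iSup _ _).symm
  · have hr := toReal_pos' h1 hp
    rw [lpS_ne_top hp, lpS_ne_top hp]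
    simp only [ENNReal.mul_rpow_of_nonneg _ _ hr.le, ENNReal.tsum_mul_left]
    rw [ENNReal.mul_rpow_of_nonneg _ _ (by positivity : (0:ℝ) ≤ 1 / p.toReal),
      ← ENNReal.rpow_mul, mul_one_div_cancel hr.ne', ENNReal.rpow_one]

lemma tsum_rpow_lpS (h1 : 1 ≤ p) (hp : p ≠ ⊤) : ∑' k, f k ^ p.toReal = (lpS p f) ^ p.toReal := by
  have hr := toReal_pos' h1 hp
  rw [lpS_ne_top hp, ← ENNReal.rpow_mul, one_div, inv_mul_cancel₀ hr.ne', ENNReal.rpow_one]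

lemma le_lpS (h1 : 1 ≤ p) (i : Zd d) : f i ≤ lpS p f := by
  by_cases hp : p = ⊤
  · subst hp; rw [lpS_top]; exact le_iSup f i
  · have hr := toReal_pos' h1 hp
    rw [lpS_ne_top hp]
    calc f i = (f i ^ p.toReal) ^ (1/p.toReal) := by
          rw [← ENNReal.rpow_mul, mul_one_div_cancel hr.ne', ENNReal.rpow_one]
    _ ≤ _ := ENNReal.rpow_le_rpow (ENNReal.le_tsum i) (by positivity)

lemma lpS_eq_zero (h1 : 1 ≤ p) (h : lpS p f = 0) (i : Zd d) : f i = 0 :=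
  le_antisymm (h ▸ le_lpS h1 i) zero_le

lemma lpS_lt_top_of (h1 : 1 ≤ p) (h : lpS p f ≠ ⊤) (i : Zd d) : f i ≠ ⊤ :=
  fun hi => h (top_le_iff.mp (hi ▸ le_lpS h1 i))

lemma lpS_zero (h1 : 1 ≤ p) : lpS p (fun _ : Zd d => (0:ℝ≥0∞)) = 0 := by
  by_cases hp : p = ⊤
  · subst hp; rw [lpS_top]; simp
  · rw [lpS_ne_top hp]
    have hr := toReal_pos' h1 hp
    simp only [ENNReal.zero_rpow_of_pos hr, tsum_zero]
    exact ENNReal.zero_rpow_of_pos (by positivity)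

def lpqE (p q : ℝ≥0∞) (F : Zd d → Zd d → ℝ≥0∞) : ℝ≥0∞ :=
  lpS q fun n => lpS p fun m => F m n

lemma lpqE_mono {F G : Zd d → Zd d → ℝ≥0∞} (h : ∀ m n, F m n ≤ G m n) :
    lpqE p q F ≤ lpqE p q G :=
  lpS_mono fun n => lpS_mono fun m => h m n

lemma lpqE_const_mul {F : Zd d → Zd d → ℝ≥0∞} (h1 : 1 ≤ p) (h2 : 1 ≤ q) :
    lpqE p q (fun m n => c * F m n) = c * lpqE p q F := by
  unfold lpqE
  rw [← lpS_const_mul h2]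
  exact congrArg _ (funext fun n => lpS_const_mul h1)

lemma lpqE_zero (h1 : 1 ≤ p) (h2 : 1 ≤ q) : lpqE p q (fun _ _ : Zd d => (0:ℝ≥0∞)) = 0 := by
  unfold lpqE
  have : (fun n : Zd d => lpS p fun _ : Zd d => (0:ℝ≥0∞)) = fun _ : Zd d => (0:ℝ≥0∞) :=
    funext fun n => lpS_zero h1
  rw [this, lpS_zero h2]

lemma lpqE_eq_zero {F : Zd d → Zd d → ℝ≥0∞} (h1 : 1 ≤ p) (h2 : 1 ≤ q)
    (h : lpqE p q F = 0) (m n : Zd d) : F m n = 0 :=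
  lpS_eq_zero h1 (lpS_eq_zero h2 h n) m

lemma le_lpqE {F : Zd d → Zd d → ℝ≥0∞} (h1 : 1 ≤ p) (h2 : 1 ≤ q) (m n : Zd d) :
    F m n ≤ lpqE p q F := by
  calc F m n ≤ lpS p (fun m => F m n) := le_lpS h1 m
  _ ≤ lpqE p q F := le_lpS h2 n

/-- Hölder inside `lpS` for finite exponent. -/
lemma lpS_rpow_holder (h1 : 1 ≤ p) (hpt : p ≠ ⊤) (f g : Zd d → ℝ≥0∞) {tf tg : ℝ}
    (htf : 0 ≤ tf) (htg : 0 ≤ tg) (hsum : tf * p.toReal + tg * p.toReal = 1) :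
    lpS p (fun i => f i ^ tf * g i ^ tg) ≤ (∑' i, f i) ^ tf * (∑' i, g i) ^ tg := by
  have hr := toReal_pos' h1 hpt
  set r := p.toReal with hrdef
  rw [lpS_ne_top hpt]
  have e1 : ∀ i, (f i ^ tf * g i ^ tg) ^ r = f i ^ (tf * r) * g i ^ (tg * r) := by
    intro i
    rw [ENNReal.mul_rpow_of_nonneg _ _ hr.le, ← ENNReal.rpow_mul, ← ENNReal.rpow_mul]
  simp only [← hrdef, e1]
  have key : ∑' i, f i ^ (tf * r) * g i ^ (tg * r)
      ≤ (∑' i, f i) ^ (tf * r) * (∑' i, g i) ^ (tg * r) := by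
    have := tsum_holder f g (t := tf * r) (by positivity) (by nlinarith [mul_nonneg htg hr.le])
    rw [show (1:ℝ) - tf * r = tg * r by linarith] at this
    exact this
  calc (∑' i, f i ^ (tf * r) * g i ^ (tg * r)) ^ (1/r)
      ≤ ((∑' i, f i) ^ (tf * r) * (∑' i, g i) ^ (tg * r)) ^ (1/r) :=
        ENNReal.rpow_le_rpow key (by positivity)
    _ = (∑' i, f i) ^ tf * (∑' i, g i) ^ tg := by
        rw [ENNReal.mul_rpow_of_nonneg _ _ (by positivity : (0:ℝ) ≤ 1/r),
          ← ENNReal.rpow_mul, ← ENNReal.rpow_mul]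
        congr 2 <;> field_simp

abbrev Z2 (d : ℕ) := Zd d × Zd d

variable {d : ℕ}

/-- the positive bilinear operator -/
def opF (k : Zd d → Zd d → Zd d → Zd d → Zd d → Zd d → ℝ≥0∞) (u v : Zd d → Zd d → ℝ≥0∞)
    (m' n' : Zd d) : ℝ≥0∞ :=
  ∑' z : Z2 d × Z2 d, k m' n' z.1.1 z.1.2 z.2.1 z.2.2 * u z.1.1 z.1.2 * v z.2.1 z.2.2

def condA (k : Zd d → Zd d → Zd d → Zd d → Zd d → Zd d → ℝ≥0∞) : ℝ≥0∞ :=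
  ⨆ n, ⨆ n₀, ∑' n', ⨆ m', ∑' m, ∑' m₀, k m' n' m n m₀ n₀
def condB (k : Zd d → Zd d → Zd d → Zd d → Zd d → Zd d → ℝ≥0∞) : ℝ≥0∞ :=
  ⨆ n', ∑' n, ∑' n₀, ⨆ m, ⨆ m₀, ∑' m', k m' n' m n m₀ n₀
def condC (k : Zd d → Zd d → Zd d → Zd d → Zd d → Zd d → ℝ≥0∞) : ℝ≥0∞ :=
  ⨆ n', ⨆ m', ∑' n, ∑' m, ∑' n₀, ∑' m₀, k m' n' m n m₀ n₀
def condD (k : Zd d → Zd d → Zd d → Zd d → Zd d → Zd d → ℝ≥0∞) : ℝ≥0∞ :=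
  ⨆ n, ⨆ m, ⨆ n₀, ⨆ m₀, ∑' n', ∑' m', k m' n' m n m₀ n₀

def N11 (u : Zd d → Zd d → ℝ≥0∞) : ℝ≥0∞ := ∑' n, ∑' m, u m n
def Nt1 (u : Zd d → Zd d → ℝ≥0∞) : ℝ≥0∞ := ∑' n, ⨆ m, u m n
def N1t (u : Zd d → Zd d → ℝ≥0∞) : ℝ≥0∞ := ⨆ n, ∑' m, u m n
def Ntt (u : Zd d → Zd d → ℝ≥0∞) : ℝ≥0∞ := ⨆ n, ⨆ m, u m n

/-- regrouping equivalence: `((m,n),(m₀,n₀)) ↦ ((n,n₀),(m,m₀))` -/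
def regp (d : ℕ) : (Z2 d × Z2 d) ≃ (Z2 d × Z2 d) where
  toFun z := ((z.1.2, z.2.2), (z.1.1, z.2.1))
  invFun w := ((w.2.1, w.1.1), (w.2.2, w.1.2))
  left_inv _ := rfl
  right_inv _ := rfl

lemma tsum_regroup (F : Z2 d × Z2 d → ℝ≥0∞) :
    ∑' z, F z = ∑' nn : Z2 d, ∑' mm : Z2 d, F ((mm.1, nn.1), (mm.2, nn.2)) := by
  rw [← Equiv.tsum_eq (regp d).symm F, ENNReal.tsum_prod']
  rfl

lemma tsum_split (F : Z2 d × Z2 d → ℝ≥0∞) :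
    ∑' z, F z = ∑' y : Z2 d, ∑' w : Z2 d, F (y, w) := ENNReal.tsum_prod'

lemma tsum_pair (F : Z2 d → ℝ≥0∞) : ∑' y : Z2 d, F y = ∑' a, ∑' b, F (a, b) :=
  ENNReal.tsum_prod'

lemma tsum_prod_mul {A B : Type*} (F : A → ℝ≥0∞) (G : B → ℝ≥0∞) :
    ∑' z : A × B, F z.1 * G z.2 = (∑' y, F y) * (∑' w, G w) := by
  rw [ENNReal.tsum_prod']
  simp only [ENNReal.tsum_mul_left, ENNReal.tsum_mul_right]

lemma le_iSup2 {α β : Type*} (f : α → β → ℝ≥0∞) (a : α) (b : β) :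
    f a b ≤ ⨆ a, ⨆ b, f a b :=
  le_iSup_of_le a (le_iSup _ b)

lemma le_iSup4 {α β γ δ : Type*} (f : α → β → γ → δ → ℝ≥0∞) (a : α) (b : β) (c : γ) (e : δ) :
    f a b c e ≤ ⨆ a, ⨆ b, ⨆ c, ⨆ e, f a b c e :=
  le_iSup_of_le a (le_iSup_of_le b (le_iSup_of_le c (le_iSup _ e)))

lemma iSup_tsum_le {α β : Type*} (f : α → β → ℝ≥0∞) :
    ⨆ a, ∑' b, f a b ≤ ∑' b, ⨆ a, f a b :=
  iSup_le fun a => ENNReal.tsum_le_tsum fun b => le_iSup (fun a => f a b) a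

variable {k : Zd d → Zd d → Zd d → Zd d → Zd d → Zd d → ℝ≥0∞} {u v : Zd d → Zd d → ℝ≥0∞}

lemma cornerC (m' n' : Zd d) : opF k u v m' n' ≤ condC k * Ntt u * Ntt v := by
  have h1 : opF k u v m' n' ≤ ∑' z : Z2 d × Z2 d,
      k m' n' z.1.1 z.1.2 z.2.1 z.2.2 * Ntt u * Ntt v := by
    refine ENNReal.tsum_le_tsum fun z => ?_
    exact mul_le_mul' (mul_le_mul' le_rfl (le_iSup2 (fun n m => u m n) z.1.2 z.1.1))
      (le_iSup2 (fun n m => v m n) z.2.2 z.2.1)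
  refine h1.trans ?_
  rw [ENNReal.tsum_mul_right, ENNReal.tsum_mul_right]
  refine mul_le_mul' (mul_le_mul' ?_ le_rfl) le_rfl
  rw [tsum_regroup]
  have : ∀ nn : Z2 d, (∑' mm : Z2 d, k m' n' mm.1 nn.1 mm.2 nn.2)
      = ∑' m, ∑' m₀, k m' n' m nn.1 m₀ nn.2 := fun _ => tsum_pair _
  calc ∑' nn : Z2 d, ∑' mm : Z2 d, k m' n' mm.1 nn.1 mm.2 nn.2
      = ∑' n, ∑' n₀, ∑' m, ∑' m₀, k m' n' m n m₀ n₀ := by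
        rw [tsum_pair (fun nn : Z2 d => ∑' mm : Z2 d, k m' n' mm.1 nn.1 mm.2 nn.2)]
        exact tsum_congr fun n => tsum_congr fun n₀ => this (n, n₀)
    _ = ∑' n, ∑' m, ∑' n₀, ∑' m₀, k m' n' m n m₀ n₀ :=
        tsum_congr fun n => ENNReal.tsum_comm
    _ ≤ condC k := le_iSup2 (fun n' m' => ∑' n, ∑' m, ∑' n₀, ∑' m₀, k m' n' m n m₀ n₀) n' m'

lemma cornerD : (∑' n', ∑' m', opF k u v m' n') ≤ condD k * N11 u * N11 v := by
  have swap : (∑' n', ∑' m', opF k u v m' n')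
      = ∑' z : Z2 d × Z2 d, (∑' n', ∑' m', k m' n' z.1.1 z.1.2 z.2.1 z.2.2)
          * u z.1.1 z.1.2 * v z.2.1 z.2.2 := by
    unfold opF
    have e1 : (∑' (n' : Zd d), ∑' (m' : Zd d), ∑' z : Z2 d × Z2 d,
        k m' n' z.1.1 z.1.2 z.2.1 z.2.2 * u z.1.1 z.1.2 * v z.2.1 z.2.2)
        = ∑' z : Z2 d × Z2 d, ∑' (n' : Zd d), ∑' (m' : Zd d),
        k m' n' z.1.1 z.1.2 z.2.1 z.2.2 * u z.1.1 z.1.2 * v z.2.1 z.2.2 :=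
      (tsum_congr fun n' => ENNReal.tsum_comm).trans ENNReal.tsum_comm
    rw [e1]
    exact tsum_congr fun z => by
      simp only [ENNReal.tsum_mul_right]
  rw [swap]
  have h2 : ∀ z : Z2 d × Z2 d,
      (∑' n', ∑' m', k m' n' z.1.1 z.1.2 z.2.1 z.2.2) * u z.1.1 z.1.2 * v z.2.1 z.2.2
        ≤ condD k * (u z.1.1 z.1.2 * v z.2.1 z.2.2) := by
    intro z
    rw [mul_assoc]
    exact mul_le_mul' (le_iSup4 (fun n m n₀ m₀ => ∑' n', ∑' m', k m' n' m n m₀ n₀)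
      z.1.2 z.1.1 z.2.2 z.2.1) le_rfl
  refine (ENNReal.tsum_le_tsum h2).trans ?_
  rw [ENNReal.tsum_mul_left]
  have hprod : (∑' i : Z2 d × Z2 d, u i.1.1 i.1.2 * v i.2.1 i.2.2)
      = (∑' y : Z2 d, u y.1 y.2) * (∑' w : Z2 d, v w.1 w.2) :=
    tsum_prod_mul (fun y : Z2 d => u y.1 y.2) (fun w : Z2 d => v w.1 w.2)
  have hu : (∑' y : Z2 d, u y.1 y.2) = N11 u := (tsum_pair _).trans ENNReal.tsum_comm
  have hv : (∑' w : Z2 d, v w.1 w.2) = N11 v := (tsum_pair _).trans ENNReal.tsum_comm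
  rw [hprod, hu, hv, mul_assoc]

lemma cornerA : (∑' n', ⨆ m', opF k u v m' n') ≤ condA k * Nt1 u * Nt1 v := by
  set su : Zd d → ℝ≥0∞ := fun n => ⨆ m, u m n with hsu
  set sv : Zd d → ℝ≥0∞ := fun n => ⨆ m, v m n with hsv
  have G : ∀ m' n', opF k u v m' n'
      ≤ ∑' nn : Z2 d, (∑' mm : Z2 d, k m' n' mm.1 nn.1 mm.2 nn.2) * su nn.1 * sv nn.2 := by
    intro m' n'
    have h1 : opF k u v m' n' ≤ ∑' z : Z2 d × Z2 d,
        k m' n' z.1.1 z.1.2 z.2.1 z.2.2 * su z.1.2 * sv z.2.2 :=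
      ENNReal.tsum_le_tsum fun z => mul_le_mul'
        (mul_le_mul' le_rfl (le_iSup (fun m => u m z.1.2) z.1.1))
        (le_iSup (fun m => v m z.2.2) z.2.1)
    refine h1.trans (le_of_eq ?_)
    rw [tsum_regroup]
    exact tsum_congr fun nn => by
      simp only [ENNReal.tsum_mul_right]
  have G2 : ∀ n', (⨆ m', opF k u v m' n')
      ≤ ∑' nn : Z2 d, (⨆ m', ∑' mm : Z2 d, k m' n' mm.1 nn.1 mm.2 nn.2) * su nn.1 * sv nn.2 := by
    intro n'
    refine (iSup_mono fun m' => G m' n').trans ?_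
    refine (iSup_tsum_le _).trans (le_of_eq (tsum_congr fun nn => ?_))
    rw [ENNReal.iSup_mul, ENNReal.iSup_mul]
  refine (ENNReal.tsum_le_tsum G2).trans ?_
  have comm : (∑' n', ∑' nn : Z2 d,
        (⨆ m', ∑' mm : Z2 d, k m' n' mm.1 nn.1 mm.2 nn.2) * su nn.1 * sv nn.2)
      = ∑' nn : Z2 d, (∑' n', ⨆ m', ∑' mm : Z2 d, k m' n' mm.1 nn.1 mm.2 nn.2)
          * su nn.1 * sv nn.2 := by
    rw [ENNReal.tsum_comm]
    exact tsum_congr fun nn => by simp only [ENNReal.tsum_mul_right]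
  rw [comm]
  have hbd : ∀ nn : Z2 d, (∑' n', ⨆ m', ∑' mm : Z2 d, k m' n' mm.1 nn.1 mm.2 nn.2) ≤ condA k := by
    intro nn
    have e : ∀ n' m', (∑' mm : Z2 d, k m' n' mm.1 nn.1 mm.2 nn.2)
        = ∑' m, ∑' m₀, k m' n' m nn.1 m₀ nn.2 := fun _ _ => tsum_pair _
    calc (∑' n', ⨆ m', ∑' mm : Z2 d, k m' n' mm.1 nn.1 mm.2 nn.2)
        = ∑' n', ⨆ m', ∑' m, ∑' m₀, k m' n' m nn.1 m₀ nn.2 :=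
          tsum_congr fun n' => iSup_congr fun m' => e n' m'
      _ ≤ condA k := le_iSup2
          (fun n n₀ => ∑' n', ⨆ m', ∑' m, ∑' m₀, k m' n' m n m₀ n₀) nn.1 nn.2
  calc ∑' nn : Z2 d, (∑' n', ⨆ m', ∑' mm : Z2 d, k m' n' mm.1 nn.1 mm.2 nn.2)
        * su nn.1 * sv nn.2
      ≤ ∑' nn : Z2 d, condA k * (su nn.1 * sv nn.2) :=
        ENNReal.tsum_le_tsum fun nn => by
          rw [mul_assoc]; exact mul_le_mul' (hbd nn) le_rfl
    _ = condA k * Nt1 u * Nt1 v := by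
        rw [ENNReal.tsum_mul_left, tsum_prod_mul su sv, mul_assoc]
        rfl

lemma cornerB : (⨆ n', ∑' m', opF k u v m' n') ≤ condB k * N1t u * N1t v := by
  set tu : Zd d → ℝ≥0∞ := fun n => ∑' m, u m n with htu
  set tv : Zd d → ℝ≥0∞ := fun n => ∑' m, v m n with htv
  refine iSup_le fun n' => ?_
  have e1 : (∑' m', opF k u v m' n')
      = ∑' z : Z2 d × Z2 d, (∑' m', k m' n' z.1.1 z.1.2 z.2.1 z.2.2)
          * u z.1.1 z.1.2 * v z.2.1 z.2.2 := by
    unfold opF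
    rw [ENNReal.tsum_comm]
    exact tsum_congr fun z => by simp only [ENNReal.tsum_mul_right]
  rw [e1, tsum_regroup]
  have step : ∀ nn : Z2 d,
      (∑' mm : Z2 d, (∑' m', k m' n' mm.1 nn.1 mm.2 nn.2) * u mm.1 nn.1 * v mm.2 nn.2)
        ≤ (⨆ m, ⨆ m₀, ∑' m', k m' n' m nn.1 m₀ nn.2) * (tu nn.1 * tv nn.2) := by
    intro nn
    have h1 : ∀ mm : Z2 d, (∑' m', k m' n' mm.1 nn.1 mm.2 nn.2) * u mm.1 nn.1 * v mm.2 nn.2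
        ≤ (⨆ m, ⨆ m₀, ∑' m', k m' n' m nn.1 m₀ nn.2) * (u mm.1 nn.1 * v mm.2 nn.2) := by
      intro mm
      rw [mul_assoc]
      exact mul_le_mul' (le_iSup2 (fun m m₀ => ∑' m', k m' n' m nn.1 m₀ nn.2) mm.1 mm.2) le_rfl
    refine (ENNReal.tsum_le_tsum h1).trans (le_of_eq ?_)
    rw [ENNReal.tsum_mul_left]
    have hprod : (∑' mm : Z2 d, u mm.1 nn.1 * v mm.2 nn.2)
        = (∑' m, u m nn.1) * (∑' m₀, v m₀ nn.2) :=
      tsum_prod_mul (fun m => u m nn.1) (fun m₀ => v m₀ nn.2)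
    rw [hprod]
  refine (ENNReal.tsum_le_tsum step).trans ?_
  have h2 : ∀ nn : Z2 d, (⨆ m, ⨆ m₀, ∑' m', k m' n' m nn.1 m₀ nn.2) * (tu nn.1 * tv nn.2)
      ≤ (⨆ m, ⨆ m₀, ∑' m', k m' n' m nn.1 m₀ nn.2) * (N1t u * N1t v) := fun nn =>
    mul_le_mul' le_rfl (mul_le_mul' (le_iSup tu nn.1) (le_iSup tv nn.2))
  refine (ENNReal.tsum_le_tsum h2).trans ?_
  rw [ENNReal.tsum_mul_right]
  have h3 : (∑' nn : Z2 d, ⨆ m, ⨆ m₀, ∑' m', k m' n' m nn.1 m₀ nn.2) ≤ condB k := by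
    have : (∑' nn : Z2 d, ⨆ m, ⨆ m₀, ∑' m', k m' n' m nn.1 m₀ nn.2)
        = ∑' n, ∑' n₀, ⨆ m, ⨆ m₀, ∑' m', k m' n' m n m₀ n₀ := tsum_pair _
    rw [this]
    exact le_iSup (fun n' => ∑' n, ∑' n₀, ⨆ m, ⨆ m₀, ∑' m', k m' n' m n m₀ n₀) n'
  calc (∑' nn : Z2 d, ⨆ m, ⨆ m₀, ∑' m', k m' n' m nn.1 m₀ nn.2) * (N1t u * N1t v)
      ≤ condB k * (N1t u * N1t v) := mul_le_mul' h3 le_rfl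
    _ = condB k * N1t u * N1t v := by rw [mul_assoc]



variable {k : Zd d → Zd d → Zd d → Zd d → Zd d → Zd d → ℝ≥0∞}

lemma opF_mul_assoc (u v : Zd d → Zd d → ℝ≥0∞) (m' n' : Zd d) :
    opF k u v m' n' = ∑' z : Z2 d × Z2 d,
      k m' n' z.1.1 z.1.2 z.2.1 z.2.2 * (u z.1.1 z.1.2 * v z.2.1 z.2.2) :=
  tsum_congr fun z => mul_assoc _ _ _

lemma pointwise_holder (a b ua ub uc ud va vb vc vd : Zd d → Zd d → ℝ≥0∞)
    {X Y : ℝ≥0∞} {tA tB tC tD : ℝ}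
    (htA : 0 ≤ tA) (htB : 0 ≤ tB) (htC : 0 ≤ tC) (htD : 0 ≤ tD)
    (hsum : tA + tB + tC + tD = 1)
    (ha : ∀ m n, a m n = X * (ua m n ^ tA * ub m n ^ tB * uc m n ^ tC * ud m n ^ tD))
    (hb : ∀ m n, b m n = Y * (va m n ^ tA * vb m n ^ tB * vc m n ^ tC * vd m n ^ tD))
    (m' n' : Zd d) :
    opF k a b m' n' ≤ X * Y * ((opF k ua va m' n') ^ tA * (opF k ub vb m' n') ^ tB *
      (opF k uc vc m' n') ^ tC * (opF k ud vd m' n') ^ tD) := by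
  have e : ∀ z : Z2 d × Z2 d,
      k m' n' z.1.1 z.1.2 z.2.1 z.2.2 * a z.1.1 z.1.2 * b z.2.1 z.2.2
      = X * Y * (k m' n' z.1.1 z.1.2 z.2.1 z.2.2 *
          ((ua z.1.1 z.1.2 * va z.2.1 z.2.2) ^ tA * (ub z.1.1 z.1.2 * vb z.2.1 z.2.2) ^ tB *
           (uc z.1.1 z.1.2 * vc z.2.1 z.2.2) ^ tC * (ud z.1.1 z.1.2 * vd z.2.1 z.2.2) ^ tD)) := by
    intro z
    rw [ha z.1.1 z.1.2, hb z.2.1 z.2.2,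
      ENNReal.mul_rpow_of_nonneg _ _ htA, ENNReal.mul_rpow_of_nonneg _ _ htB,
      ENNReal.mul_rpow_of_nonneg _ _ htC, ENNReal.mul_rpow_of_nonneg _ _ htD]
    ring
  unfold opF
  calc (∑' z : Z2 d × Z2 d, k m' n' z.1.1 z.1.2 z.2.1 z.2.2 * a z.1.1 z.1.2 * b z.2.1 z.2.2)
      = X * Y * ∑' z : Z2 d × Z2 d, k m' n' z.1.1 z.1.2 z.2.1 z.2.2 *
          ((ua z.1.1 z.1.2 * va z.2.1 z.2.2) ^ tA * (ub z.1.1 z.1.2 * vb z.2.1 z.2.2) ^ tB *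
           (uc z.1.1 z.1.2 * vc z.2.1 z.2.2) ^ tC * (ud z.1.1 z.1.2 * vd z.2.1 z.2.2) ^ tD) := by
        rw [← ENNReal.tsum_mul_left]
        exact tsum_congr e
    _ ≤ X * Y * ((opF k ua va m' n') ^ tA * (opF k ub vb m' n') ^ tB *
        (opF k uc vc m' n') ^ tC * (opF k ud vd m' n') ^ tD) := by
        refine mul_le_mul' le_rfl ?_
        have h4 := tsum_holder4_w (fun z : Z2 d × Z2 d => k m' n' z.1.1 z.1.2 z.2.1 z.2.2)
          (fun z => ua z.1.1 z.1.2 * va z.2.1 z.2.2) (fun z => ub z.1.1 z.1.2 * vb z.2.1 z.2.2)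
          (fun z => uc z.1.1 z.1.2 * vc z.2.1 z.2.2) (fun z => ud z.1.1 z.1.2 * vd z.2.1 z.2.2)
          htA htB htC htD hsum
        rw [opF_mul_assoc, opF_mul_assoc, opF_mul_assoc, opF_mul_assoc]
        exact h4


lemma pow2_le {M wA wC : ℝ≥0∞} {tA tC : ℝ} (hA : wA ≤ M) (hC : wC ≤ M)
    (htA : 0 ≤ tA) (htC : 0 ≤ tC) (hsum : tA + tC = 1) :
    wA ^ tA * wC ^ tC ≤ M := by
  calc wA ^ tA * wC ^ tC ≤ M ^ tA * M ^ tC :=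
      mul_le_mul' (ENNReal.rpow_le_rpow hA htA) (ENNReal.rpow_le_rpow hC htC)
  _ = M := by rw [← ENNReal.rpow_add_of_nonneg _ _ htA htC, hsum, ENNReal.rpow_one]

lemma lpqE_top_top (F : Zd d → Zd d → ℝ≥0∞) : lpqE ⊤ ⊤ F = Ntt F := by
  unfold lpqE Ntt
  rw [show (fun n => lpS ⊤ fun m => F m n) = fun n => ⨆ m, F m n from
    funext fun n => lpS_top, lpS_top]

lemma lpqE_top_q (hqt : q ≠ ⊤) (F : Zd d → Zd d → ℝ≥0∞) :
    lpqE ⊤ q F = (∑' n, (⨆ m, F m n) ^ q.toReal) ^ (1/q.toReal) := by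
  unfold lpqE
  rw [show (fun n => lpS ⊤ fun m => F m n) = fun n => ⨆ m, F m n from
    funext fun n => lpS_top, lpS_ne_top hqt]

lemma Ntt_one : Ntt (fun _ _ : Zd d => (1:ℝ≥0∞)) ≤ 1 :=
  iSup_le fun _ => iSup_le fun _ => le_rfl

lemma lpS_rpow_single (h1 : 1 ≤ p) (hpt : p ≠ ⊤) (f : Zd d → ℝ≥0∞) {tf : ℝ}
    (htf : tf * p.toReal = 1) :
    lpS p (fun i => f i ^ tf) = (∑' i, f i) ^ tf := by
  have hr := toReal_pos' h1 hpt
  have htf' : tf = 1 / p.toReal := by field_simp; nlinarith [htf]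
  rw [lpS_ne_top hpt]
  have e : ∀ i, (f i ^ tf) ^ p.toReal = f i := by
    intro i
    rw [← ENNReal.rpow_mul, htf, ENNReal.rpow_one]
  simp only [e]
  rw [htf']

/-- assembly for the case `p = ⊤`, `q` finite -/
lemma assembly2 (hq1 : 1 ≤ q) (hqt : q ≠ ⊤) (wa wc : Zd d → Zd d → ℝ≥0∞) {tA tC : ℝ}
    (htA : 0 ≤ tA) (htC : 0 ≤ tC) (htAq : tA * q.toReal = 1) :
    lpqE ⊤ q (fun m' n' => wa m' n' ^ tA * wc m' n' ^ tC)
      ≤ (Nt1 wa) ^ tA * (Ntt wc) ^ tC := by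
  set sa : Zd d → ℝ≥0∞ := fun n' => ⨆ m', wa m' n' with hsa
  have inner : ∀ n', (⨆ m', wa m' n' ^ tA * wc m' n' ^ tC) ≤ (Ntt wc) ^ tC * sa n' ^ tA := by
    intro n'
    refine iSup_le fun m' => ?_
    rw [mul_comm]
    exact mul_le_mul'
      (ENNReal.rpow_le_rpow (le_iSup2 (fun n m => wc m n) n' m') htC)
      (ENNReal.rpow_le_rpow (le_iSup (fun m' => wa m' n') m') htA)
  calc lpqE ⊤ q (fun m' n' => wa m' n' ^ tA * wc m' n' ^ tC)
      ≤ lpS q (fun n' => (Ntt wc) ^ tC * sa n' ^ tA) := by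
        unfold lpqE
        refine lpS_mono fun n' => ?_
        rw [show (lpS ⊤ fun m' => wa m' n' ^ tA * wc m' n' ^ tC)
          = ⨆ m', wa m' n' ^ tA * wc m' n' ^ tC from lpS_top]
        exact inner n'
    _ = (Ntt wc) ^ tC * lpS q (fun n' => sa n' ^ tA) := lpS_const_mul hq1
    _ = (Ntt wc) ^ tC * (∑' n', sa n') ^ tA := by rw [lpS_rpow_single hq1 hqt _ htAq]
    _ = (Nt1 wa) ^ tA * (Ntt wc) ^ tC := mul_comm _ _

/-- assembly for the case `p` finite, `q = ⊤` -/
lemma assembly3 (hp1 : 1 ≤ p) (hpt : p ≠ ⊤) (wb wc : Zd d → Zd d → ℝ≥0∞) {tB tC : ℝ}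
    (htB : 0 ≤ tB) (htC : 0 ≤ tC) (htBp : tB * p.toReal = 1) :
    lpqE p ⊤ (fun m' n' => wb m' n' ^ tB * wc m' n' ^ tC)
      ≤ (N1t wb) ^ tB * (Ntt wc) ^ tC := by
  have inner : ∀ n', lpS p (fun m' => wb m' n' ^ tB * wc m' n' ^ tC)
      ≤ (Ntt wc) ^ tC * (∑' m', wb m' n') ^ tB := by
    intro n'
    calc lpS p (fun m' => wb m' n' ^ tB * wc m' n' ^ tC)
        ≤ lpS p (fun m' => (Ntt wc) ^ tC * wb m' n' ^ tB) := by
          refine lpS_mono fun m' => ?_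
          rw [mul_comm]
          exact mul_le_mul' (ENNReal.rpow_le_rpow (le_iSup2 (fun n m => wc m n) n' m') htC)
            le_rfl
      _ = (Ntt wc) ^ tC * lpS p (fun m' => wb m' n' ^ tB) := lpS_const_mul hp1
      _ = (Ntt wc) ^ tC * (∑' m', wb m' n') ^ tB := by rw [lpS_rpow_single hp1 hpt _ htBp]
  calc lpqE p ⊤ (fun m' n' => wb m' n' ^ tB * wc m' n' ^ tC)
      = ⨆ n', lpS p (fun m' => wb m' n' ^ tB * wc m' n' ^ tC) := lpS_top
    _ ≤ ⨆ n', (Ntt wc) ^ tC * (∑' m', wb m' n') ^ tB := iSup_mono inner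
    _ ≤ (Ntt wc) ^ tC * (N1t wb) ^ tB := by
        refine iSup_le fun n' => mul_le_mul' le_rfl (ENNReal.rpow_le_rpow ?_ htB)
        exact le_iSup (fun n' => ∑' m', wb m' n') n'
    _ = (N1t wb) ^ tB * (Ntt wc) ^ tC := mul_comm _ _


lemma core_case4 (a b : Zd d → Zd d → ℝ≥0∞) {M : ℝ≥0∞} (hC : condC k ≤ M)
    (hX0 : lpqE ⊤ ⊤ a ≠ 0) (hXt : lpqE ⊤ ⊤ a ≠ ⊤)
    (hY0 : lpqE ⊤ ⊤ b ≠ 0) (hYt : lpqE ⊤ ⊤ b ≠ ⊤) :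
    lpqE ⊤ ⊤ (opF k a b) ≤ M * lpqE ⊤ ⊤ a * lpqE ⊤ ⊤ b := by
  set X := lpqE ⊤ ⊤ a with hX
  set Y := lpqE ⊤ ⊤ b with hY
  set uc : Zd d → Zd d → ℝ≥0∞ := fun m n => a m n * X⁻¹ with huc
  set vc : Zd d → Zd d → ℝ≥0∞ := fun m n => b m n * Y⁻¹ with hvc
  have ha : ∀ m n, a m n = X * uc m n := by
    intro m n
    rw [huc]
    rw [show X * (a m n * X⁻¹) = a m n * (X * X⁻¹) from by ring,
      ENNReal.mul_inv_cancel hX0 hXt, mul_one]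
  have hb : ∀ m n, b m n = Y * vc m n := by
    intro m n
    rw [hvc]
    rw [show Y * (b m n * Y⁻¹) = b m n * (Y * Y⁻¹) from by ring,
      ENNReal.mul_inv_cancel hY0 hYt, mul_one]
  have hNu : Ntt uc ≤ 1 := by
    have : Ntt uc = Ntt a * X⁻¹ := by
      unfold Ntt
      rw [huc]
      simp only [ENNReal.iSup_mul]
    rw [this, ← lpqE_top_top]
    exact mul_inv_le_one' X
  have hNv : Ntt vc ≤ 1 := by
    have : Ntt vc = Ntt b * Y⁻¹ := by
      unfold Ntt
      rw [hvc]
      simp only [ENNReal.iSup_mul]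
    rw [this, ← lpqE_top_top]
    exact mul_inv_le_one' Y
  have point : ∀ m' n', opF k a b m' n' ≤ X * Y * opF k uc vc m' n' := by
    intro m' n'
    refine le_of_eq ?_
    unfold opF
    rw [← ENNReal.tsum_mul_left]
    exact tsum_congr fun z => by rw [ha z.1.1 z.1.2, hb z.2.1 z.2.2]; ring
  calc lpqE ⊤ ⊤ (opF k a b) ≤ lpqE ⊤ ⊤ (fun m' n' => X * Y * opF k uc vc m' n') :=
      lpqE_mono point
    _ = X * Y * lpqE ⊤ ⊤ (opF k uc vc) := lpqE_const_mul le_top le_top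
    _ ≤ X * Y * M := by
        refine mul_le_mul' le_rfl ?_
        rw [lpqE_top_top]
        refine le_trans ?_ (le_one_tri hC hNu hNv)
        exact iSup_le fun n' => iSup_le fun m' => cornerC m' n'
    _ = M * X * Y := by ring

lemma core_case2 {q : ℝ≥0∞} (hq1 : 1 ≤ q) (hqt : q ≠ ⊤)
    (a b : Zd d → Zd d → ℝ≥0∞) {M : ℝ≥0∞} (hA : condA k ≤ M) (hC : condC k ≤ M)
    (hX0 : lpqE ⊤ q a ≠ 0) (hXt : lpqE ⊤ q a ≠ ⊤)
    (hY0 : lpqE ⊤ q b ≠ 0) (hYt : lpqE ⊤ q b ≠ ⊤) :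
    lpqE ⊤ q (opF k a b) ≤ M * lpqE ⊤ q a * lpqE ⊤ q b := by
  have hs1 : 1 ≤ q.toReal := one_le_toReal hq1 hqt
  have hs0 : 0 < q.toReal := by linarith
  set s := q.toReal with hsdef
  set X := lpqE ⊤ q a with hX
  set Y := lpqE ⊤ q b with hY
  set tA : ℝ := 1/s with htAdef
  set tC : ℝ := 1 - 1/s with htCdef
  have htA : 0 ≤ tA := by positivity
  have htC : 0 ≤ tC := by rw [htCdef]; rw [sub_nonneg]; exact (div_le_one hs0).mpr hs1
  have htAq : tA * s = 1 := by rw [htAdef]; field_simp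
  set one : Zd d → Zd d → ℝ≥0∞ := fun _ _ => (1:ℝ≥0∞) with hone
  set ua : Zd d → Zd d → ℝ≥0∞ := fun m n => a m n ^ s * (X ^ s)⁻¹ with hua
  set va : Zd d → Zd d → ℝ≥0∞ := fun m n => b m n ^ s * (Y ^ s)⁻¹ with hva
  have key : ∀ (c : Zd d → Zd d → ℝ≥0∞) (Z : ℝ≥0∞), Z ≠ 0 → Z ≠ ⊤ →
      ∀ m n, c m n = Z * ((c m n ^ s * (Z ^ s)⁻¹) ^ tA * one m n ^ tC) := by
    intro c Z hZ0 hZt m n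
    rw [hone]
    simp only [ENNReal.one_rpow, mul_one]
    rw [ENNReal.mul_rpow_of_nonneg _ _ htA, ← ENNReal.rpow_neg, ← ENNReal.rpow_mul,
      ← ENNReal.rpow_mul, htAdef]
    rw [mul_one_div_cancel hs0.ne', show -s * (1/s) = -1 by field_simp, ENNReal.rpow_one,
      ENNReal.rpow_neg_one]
    rw [show Z * (c m n * Z⁻¹) = c m n * (Z * Z⁻¹) from by ring,
      ENNReal.mul_inv_cancel hZ0 hZt, mul_one]
  have ha := key a X hX0 hXt
  have hb := key b Y hY0 hYt
  -- norm bound for ua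
  have normkey : ∀ (c : Zd d → Zd d → ℝ≥0∞) (Z : ℝ≥0∞), lpqE ⊤ q c = Z →
      Nt1 (fun m n => c m n ^ s * (Z ^ s)⁻¹) ≤ 1 := by
    intro c Z hZ
    have e1 : Nt1 (fun m n => c m n ^ s * (Z ^ s)⁻¹)
        = (∑' n, (⨆ m, c m n) ^ s) * (Z ^ s)⁻¹ := by
      unfold Nt1
      rw [← ENNReal.tsum_mul_right]
      refine tsum_congr fun n => ?_
      rw [← ENNReal.iSup_mul, iSup_rpow _ hs0]
    have e2 : (∑' n, (⨆ m, c m n) ^ s) = Z ^ s := by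
      have h3 : lpS q (fun n => ⨆ m, c m n) = Z := by
        rw [← hZ]
        unfold lpqE
        exact congrArg _ (funext fun n => lpS_top.symm)
      rw [tsum_rpow_lpS hq1 hqt, h3]
    rw [e1, e2]
    exact mul_inv_le_one' _
  have hNua : Nt1 ua ≤ 1 := normkey a X hX.symm
  have hNva : Nt1 va ≤ 1 := normkey b Y hY.symm
  have point : ∀ m' n', opF k a b m' n'
      ≤ X * Y * ((opF k ua va m' n') ^ tA * (opF k one one m' n') ^ tC) := by
    intro m' n'
    have := pointwise_holder (k := k) (X := X) (Y := Y) (tA := tA) (tB := 0) (tC := tC) (tD := 0)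
      a b ua one one one va one one one
      htA le_rfl htC le_rfl (by rw [htAdef, htCdef]; ring)
      (fun m n => by
        rw [ha m n, hua, hone]
        simp only [ENNReal.rpow_zero, ENNReal.one_rpow, mul_one, one_mul])
      (fun m n => by
        rw [hb m n, hva, hone]
        simp only [ENNReal.rpow_zero, ENNReal.one_rpow, mul_one, one_mul]) m' n'
    refine this.trans (le_of_eq ?_)
    simp only [ENNReal.rpow_zero, mul_one, one_mul]
  calc lpqE ⊤ q (opF k a b)
      ≤ lpqE ⊤ q (fun m' n' => X * Y *
          ((opF k ua va m' n') ^ tA * (opF k one one m' n') ^ tC)) := lpqE_mono point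
    _ = X * Y * lpqE ⊤ q (fun m' n' =>
          (opF k ua va m' n') ^ tA * (opF k one one m' n') ^ tC) :=
        lpqE_const_mul le_top hq1
    _ ≤ X * Y * ((Nt1 (opF k ua va)) ^ tA * (Ntt (opF k one one)) ^ tC) :=
        mul_le_mul' le_rfl (assembly2 hq1 hqt _ _ htA htC htAq)
    _ ≤ X * Y * M := by
        refine mul_le_mul' le_rfl ?_
        refine pow2_le ?_ ?_ htA htC (by rw [htAdef, htCdef]; ring)
        · exact (cornerA).trans (le_one_tri hA hNua hNva)
        · have h1 : Ntt (opF k one one) ≤ condC k * Ntt one * Ntt one :=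
            iSup_le fun n' => iSup_le fun m' => cornerC m' n'
          exact h1.trans (le_one_tri hC Ntt_one Ntt_one)
    _ = M * X * Y := by ring


lemma core_case3 {p : ℝ≥0∞} (hp1 : 1 ≤ p) (hpt : p ≠ ⊤)
    (a b : Zd d → Zd d → ℝ≥0∞) {M : ℝ≥0∞} (hB : condB k ≤ M) (hC : condC k ≤ M)
    (hX0 : lpqE p ⊤ a ≠ 0) (hXt : lpqE p ⊤ a ≠ ⊤)
    (hY0 : lpqE p ⊤ b ≠ 0) (hYt : lpqE p ⊤ b ≠ ⊤) :
    lpqE p ⊤ (opF k a b) ≤ M * lpqE p ⊤ a * lpqE p ⊤ b := by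
  have hr1 : 1 ≤ p.toReal := one_le_toReal hp1 hpt
  have hr0 : 0 < p.toReal := by linarith
  set r := p.toReal with hrdef
  set X := lpqE p ⊤ a with hX
  set Y := lpqE p ⊤ b with hY
  set tB : ℝ := 1/r with htBdef
  set tC : ℝ := 1 - 1/r with htCdef
  have htB : 0 ≤ tB := by positivity
  have htC : 0 ≤ tC := by rw [htCdef]; rw [sub_nonneg]; exact (div_le_one hr0).mpr hr1
  have htBp : tB * r = 1 := by rw [htBdef]; field_simp
  set one : Zd d → Zd d → ℝ≥0∞ := fun _ _ => (1:ℝ≥0∞) with hone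
  set ub : Zd d → Zd d → ℝ≥0∞ := fun m n => a m n ^ r * (X ^ r)⁻¹ with hub
  set vb : Zd d → Zd d → ℝ≥0∞ := fun m n => b m n ^ r * (Y ^ r)⁻¹ with hvb
  have key : ∀ (c : Zd d → Zd d → ℝ≥0∞) (Z : ℝ≥0∞), Z ≠ 0 → Z ≠ ⊤ →
      ∀ m n, c m n = Z * ((c m n ^ r * (Z ^ r)⁻¹) ^ tB * one m n ^ tC) := by
    intro c Z hZ0 hZt m n
    rw [hone]
    simp only [ENNReal.one_rpow, mul_one]
    rw [ENNReal.mul_rpow_of_nonneg _ _ htB, ← ENNReal.rpow_neg, ← ENNReal.rpow_mul,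
      ← ENNReal.rpow_mul, htBdef]
    rw [mul_one_div_cancel hr0.ne', show -r * (1/r) = -1 by field_simp, ENNReal.rpow_one,
      ENNReal.rpow_neg_one]
    rw [show Z * (c m n * Z⁻¹) = c m n * (Z * Z⁻¹) from by ring,
      ENNReal.mul_inv_cancel hZ0 hZt, mul_one]
  have ha := key a X hX0 hXt
  have hb := key b Y hY0 hYt
  have normkey : ∀ (c : Zd d → Zd d → ℝ≥0∞) (Z : ℝ≥0∞), lpqE p ⊤ c = Z →
      N1t (fun m n => c m n ^ r * (Z ^ r)⁻¹) ≤ 1 := by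
    intro c Z hZ
    have e1 : ∀ n, (∑' m, c m n ^ r * (Z ^ r)⁻¹) = (lpS p (fun m => c m n)) ^ r * (Z ^ r)⁻¹ := by
      intro n
      rw [ENNReal.tsum_mul_right, tsum_rpow_lpS hp1 hpt]
    have e2 : ∀ n, lpS p (fun m => c m n) ≤ Z := by
      intro n
      rw [← hZ]
      unfold lpqE
      rw [lpS_top]
      exact le_iSup (fun n => lpS p fun m => c m n) n
    unfold N1t
    refine iSup_le fun n => ?_
    rw [e1 n]
    calc (lpS p (fun m => c m n)) ^ r * (Z ^ r)⁻¹
        ≤ Z ^ r * (Z ^ r)⁻¹ := mul_le_mul' (ENNReal.rpow_le_rpow (e2 n) hr0.le) le_rfl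
      _ ≤ 1 := mul_inv_le_one' _
  have hNub : N1t ub ≤ 1 := normkey a X hX.symm
  have hNvb : N1t vb ≤ 1 := normkey b Y hY.symm
  have point : ∀ m' n', opF k a b m' n'
      ≤ X * Y * ((opF k ub vb m' n') ^ tB * (opF k one one m' n') ^ tC) := by
    intro m' n'
    have := pointwise_holder (k := k) (X := X) (Y := Y) (tA := 0) (tB := tB) (tC := tC) (tD := 0)
      a b one ub one one one vb one one
      le_rfl htB htC le_rfl (by rw [htBdef, htCdef]; ring)
      (fun m n => by
        rw [ha m n, hub, hone]
        simp only [ENNReal.rpow_zero, ENNReal.one_rpow, mul_one, one_mul])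
      (fun m n => by
        rw [hb m n, hvb, hone]
        simp only [ENNReal.rpow_zero, ENNReal.one_rpow, mul_one, one_mul]) m' n'
    refine this.trans (le_of_eq ?_)
    simp only [ENNReal.rpow_zero, mul_one, one_mul]
  calc lpqE p ⊤ (opF k a b)
      ≤ lpqE p ⊤ (fun m' n' => X * Y *
          ((opF k ub vb m' n') ^ tB * (opF k one one m' n') ^ tC)) := lpqE_mono point
    _ = X * Y * lpqE p ⊤ (fun m' n' =>
          (opF k ub vb m' n') ^ tB * (opF k one one m' n') ^ tC) :=
        lpqE_const_mul hp1 le_top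
    _ ≤ X * Y * ((N1t (opF k ub vb)) ^ tB * (Ntt (opF k one one)) ^ tC) :=
        mul_le_mul' le_rfl (assembly3 hp1 hpt _ _ htB htC htBp)
    _ ≤ X * Y * M := by
        refine mul_le_mul' le_rfl ?_
        refine pow2_le ?_ ?_ htB htC (by rw [htBdef, htCdef]; ring)
        · exact (cornerB).trans (le_one_tri hB hNub hNvb)
        · have h1 : Ntt (opF k one one) ≤ condC k * Ntt one * Ntt one :=
            iSup_le fun n' => iSup_le fun m' => cornerC m' n'
          exact h1.trans (le_one_tri hC Ntt_one Ntt_one)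
    _ = M * X * Y := by ring


/-- assembly for the main case: both `p, q` finite -/
lemma assembly1 (hp1 : 1 ≤ p) (hpt : p ≠ ⊤) (hq1 : 1 ≤ q) (hqt : q ≠ ⊤)
    (wa wb wc wd : Zd d → Zd d → ℝ≥0∞) {tA tB tC tD : ℝ}
    (htA : 0 ≤ tA) (htB : 0 ≤ tB) (htC : 0 ≤ tC) (htD : 0 ≤ tD)
    (hmp : tB * p.toReal + tD * p.toReal = 1)
    (hnq : tA * q.toReal + tD * q.toReal = 1) :
    lpqE p q (fun m' n' => wa m' n' ^ tA * wb m' n' ^ tB * wc m' n' ^ tC * wd m' n' ^ tD)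
      ≤ (Nt1 wa) ^ tA * (N1t wb) ^ tB * (Ntt wc) ^ tC * (N11 wd) ^ tD := by
  set sa : Zd d → ℝ≥0∞ := fun n' => ⨆ m', wa m' n' with hsa
  set tb : Zd d → ℝ≥0∞ := fun n' => ∑' m', wb m' n' with htb
  set td : Zd d → ℝ≥0∞ := fun n' => ∑' m', wd m' n' with htd
  have inner : ∀ n', lpS p (fun m' => wa m' n' ^ tA * wb m' n' ^ tB * wc m' n' ^ tC * wd m' n' ^ tD)
      ≤ (sa n' ^ tA * (Ntt wc) ^ tC) * (tb n' ^ tB * td n' ^ tD) := by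
    intro n'
    calc lpS p (fun m' => wa m' n' ^ tA * wb m' n' ^ tB * wc m' n' ^ tC * wd m' n' ^ tD)
        ≤ lpS p (fun m' => (sa n' ^ tA * (Ntt wc) ^ tC) * (wb m' n' ^ tB * wd m' n' ^ tD)) := by
          refine lpS_mono fun m' => ?_
          rw [show wa m' n' ^ tA * wb m' n' ^ tB * wc m' n' ^ tC * wd m' n' ^ tD
            = (wa m' n' ^ tA * wc m' n' ^ tC) * (wb m' n' ^ tB * wd m' n' ^ tD) from by ring]
          refine mul_le_mul' (mul_le_mul' ?_ ?_) le_rfl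
          · exact ENNReal.rpow_le_rpow (le_iSup (fun m' => wa m' n') m') htA
          · exact ENNReal.rpow_le_rpow (le_iSup2 (fun n m => wc m n) n' m') htC
      _ = (sa n' ^ tA * (Ntt wc) ^ tC) * lpS p (fun m' => wb m' n' ^ tB * wd m' n' ^ tD) :=
          lpS_const_mul hp1
      _ ≤ (sa n' ^ tA * (Ntt wc) ^ tC) * (tb n' ^ tB * td n' ^ tD) :=
          mul_le_mul' le_rfl (lpS_rpow_holder hp1 hpt _ _ htB htD hmp)
  calc lpqE p q (fun m' n' => wa m' n' ^ tA * wb m' n' ^ tB * wc m' n' ^ tC * wd m' n' ^ tD)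
      ≤ lpS q (fun n' => (sa n' ^ tA * (Ntt wc) ^ tC) * (tb n' ^ tB * td n' ^ tD)) :=
        lpS_mono inner
    _ ≤ lpS q (fun n' => ((Ntt wc) ^ tC * (N1t wb) ^ tB) * (sa n' ^ tA * td n' ^ tD)) := by
        refine lpS_mono fun n' => ?_
        rw [show (sa n' ^ tA * (Ntt wc) ^ tC) * (tb n' ^ tB * td n' ^ tD)
          = ((Ntt wc) ^ tC * tb n' ^ tB) * (sa n' ^ tA * td n' ^ tD) from by ring]
        refine mul_le_mul' (mul_le_mul' le_rfl ?_) le_rfl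
        exact ENNReal.rpow_le_rpow (le_iSup tb n') htB
    _ = ((Ntt wc) ^ tC * (N1t wb) ^ tB) * lpS q (fun n' => sa n' ^ tA * td n' ^ tD) :=
        lpS_const_mul hq1
    _ ≤ ((Ntt wc) ^ tC * (N1t wb) ^ tB) * ((∑' n', sa n') ^ tA * (∑' n', td n') ^ tD) :=
        mul_le_mul' le_rfl (lpS_rpow_holder hq1 hqt _ _ htA htD hnq)
    _ = (Nt1 wa) ^ tA * (N1t wb) ^ tB * (Ntt wc) ^ tC * (N11 wd) ^ tD := by
        rw [show (∑' n', sa n') = Nt1 wa from rfl, show (∑' n', td n') = N11 wd from rfl]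
        ring


lemma core_case1 {p q : ℝ≥0∞} (hp1 : 1 ≤ p) (hpt : p ≠ ⊤) (hq1 : 1 ≤ q) (hqt : q ≠ ⊤)
    (a b : Zd d → Zd d → ℝ≥0∞) {M : ℝ≥0∞}
    (hA : condA k ≤ M) (hB : condB k ≤ M) (hC : condC k ≤ M) (hD : condD k ≤ M)
    (hX0 : lpqE p q a ≠ 0) (hXt : lpqE p q a ≠ ⊤)
    (hY0 : lpqE p q b ≠ 0) (hYt : lpqE p q b ≠ ⊤) :
    lpqE p q (opF k a b) ≤ M * lpqE p q a * lpqE p q b := by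
  have hr1 : 1 ≤ p.toReal := one_le_toReal hp1 hpt
  have hs1 : 1 ≤ q.toReal := one_le_toReal hq1 hqt
  have hr0 : 0 < p.toReal := by linarith
  have hs0 : 0 < q.toReal := by linarith
  set r := p.toReal with hrdef
  set s := q.toReal with hsdef
  set tA : ℝ := (1 - 1/r) * (1/s) with htAdef
  set tB : ℝ := (1/r) * (1 - 1/s) with htBdef
  set tC : ℝ := (1 - 1/r) * (1 - 1/s) with htCdef
  set tD : ℝ := (1/r) * (1/s) with htDdef
  have h1r : (0:ℝ) ≤ 1 - 1/r := by rw [sub_nonneg]; exact (div_le_one hr0).mpr hr1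
  have h1s : (0:ℝ) ≤ 1 - 1/s := by rw [sub_nonneg]; exact (div_le_one hs0).mpr hs1
  have htA : 0 ≤ tA := mul_nonneg h1r (by positivity)
  have htB : 0 ≤ tB := mul_nonneg (by positivity) h1s
  have htC : 0 ≤ tC := mul_nonneg h1r h1s
  have htDpos : 0 < tD := by rw [htDdef]; positivity
  have htD : 0 ≤ tD := htDpos.le
  have hsum : tA + tB + tC + tD = 1 := by rw [htAdef, htBdef, htCdef, htDdef]; ring
  have hmp : tB * r + tD * r = 1 := by
    rw [htBdef, htDdef]; field_simp; ring
  have hnq : tA * s + tD * s = 1 := by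
    rw [htAdef, htDdef]; field_simp; ring
  set X := lpqE p q a with hX
  set Y := lpqE p q b with hY
  have fact : ∀ (c : Zd d → Zd d → ℝ≥0∞) (Z : ℝ≥0∞), Z ≠ 0 → Z ≠ ⊤ → lpqE p q c = Z →
      ∃ ua ub ud : Zd d → Zd d → ℝ≥0∞,
        (∀ m n, c m n = Z * (ua m n ^ tA * ub m n ^ tB * (1:ℝ≥0∞) ^ tC * ud m n ^ tD)) ∧
        Nt1 ua ≤ 1 ∧ N1t ub ≤ 1 ∧ N11 ud ≤ 1 := by
    intro c Z hZ0 hZt hZ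
    set xf : Zd d → ℝ≥0∞ := fun n => lpS p (fun m => c m n) with hxf
    have hZq : lpS q xf = Z := hZ
    have hxZ : ∀ n, xf n ≤ Z := fun n => hZq ▸ le_lpS hq1 n
    have hxt : ∀ n, xf n ≠ ⊤ := fun n => lpS_lt_top_of hq1 (by rw [hZq]; exact hZt) n
    have hsum_xs : (∑' n, xf n ^ s) = Z ^ s := by rw [tsum_rpow_lpS hq1 hqt, hZq]
    have hsum_cr : ∀ n, (∑' m, c m n ^ r) = xf n ^ r := fun n => tsum_rpow_lpS hp1 hpt
    have hZs0 : Z ^ s ≠ 0 := fun h => hZ0 ((ENNReal.rpow_eq_zero_iff_of_pos hs0).mp h)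
    have hZst : Z ^ s ≠ ⊤ := fun h => hZt ((ENNReal.rpow_eq_top_iff_of_pos hs0).mp h)
    refine ⟨fun _ n => xf n ^ s * (Z ^ s)⁻¹, fun m n => c m n ^ r * (xf n ^ r)⁻¹,
      fun m n => c m n ^ r * xf n ^ (s - r) * (Z ^ s)⁻¹, ?_, ?_, ?_, ?_⟩
    · intro m n
      by_cases hc : c m n = 0
      · simp [hc, ENNReal.zero_rpow_of_pos hr0, ENNReal.zero_rpow_of_pos htDpos]
      · have hcx : c m n ≤ xf n := le_lpS hp1 m
        have hx0 : xf n ≠ 0 := fun h => hc (le_antisymm (h ▸ hcx) zero_le)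
        have hct : c m n ≠ ⊤ := fun h => (hxt n) (top_le_iff.mp (h ▸ hcx))
        have e_a : (xf n ^ s * (Z ^ s)⁻¹) ^ tA = xf n ^ (s*tA) * Z ^ (-(s*tA)) := by
          rw [← ENNReal.rpow_neg, ENNReal.mul_rpow_of_nonneg _ _ htA, ← ENNReal.rpow_mul,
            ← ENNReal.rpow_mul, neg_mul]
        have e_b : (c m n ^ r * (xf n ^ r)⁻¹) ^ tB = c m n ^ (r*tB) * xf n ^ (-(r*tB)) := by
          rw [← ENNReal.rpow_neg, ENNReal.mul_rpow_of_nonneg _ _ htB, ← ENNReal.rpow_mul,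
            ← ENNReal.rpow_mul, neg_mul]
        have e_d : (c m n ^ r * xf n ^ (s-r) * (Z ^ s)⁻¹) ^ tD
            = c m n ^ (r*tD) * xf n ^ ((s-r)*tD) * Z ^ (-(s*tD)) := by
          rw [← ENNReal.rpow_neg, ENNReal.mul_rpow_of_nonneg _ _ htD,
            ENNReal.mul_rpow_of_nonneg _ _ htD, ← ENNReal.rpow_mul, ← ENNReal.rpow_mul,
            ← ENNReal.rpow_mul, neg_mul]
        rw [e_a, e_b, e_d, ENNReal.one_rpow]
        rw [show Z * (xf n ^ (s*tA) * Z ^ (-(s*tA)) * (c m n ^ (r*tB) * xf n ^ (-(r*tB))) * 1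
              * (c m n ^ (r*tD) * xf n ^ ((s-r)*tD) * Z ^ (-(s*tD))))
            = (c m n ^ (r*tB) * c m n ^ (r*tD))
              * ((xf n ^ (s*tA) * xf n ^ (-(r*tB)) * xf n ^ ((s-r)*tD))
                * (Z * (Z ^ (-(s*tA)) * Z ^ (-(s*tD))))) from by ring]
        have hc1 : c m n ^ (r*tB) * c m n ^ (r*tD) = c m n := by
          rw [← ENNReal.rpow_add _ _ hc hct,
            show r*tB + r*tD = 1 from by rw [htBdef, htDdef]; field_simp; ring, ENNReal.rpow_one]
        have hx1 : xf n ^ (s*tA) * xf n ^ (-(r*tB)) * xf n ^ ((s-r)*tD) = 1 := by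
          rw [← ENNReal.rpow_add _ _ hx0 (hxt n), ← ENNReal.rpow_add _ _ hx0 (hxt n),
            show s*tA + -(r*tB) + (s-r)*tD = 0 from by
              rw [htAdef, htBdef, htDdef]; field_simp; ring, ENNReal.rpow_zero]
        have hZ2 : Z * (Z ^ (-(s*tA)) * Z ^ (-(s*tD))) = 1 := by
          have e : Z * (Z ^ (-(s*tA)) * Z ^ (-(s*tD))) = Z ^ ((1:ℝ) + (-(s*tA) + -(s*tD))) := by
            rw [ENNReal.rpow_add _ _ hZ0 hZt, ENNReal.rpow_add _ _ hZ0 hZt, ENNReal.rpow_one]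
          rw [e, show (1:ℝ) + (-(s*tA) + -(s*tD)) = 0 from by
            rw [htAdef, htDdef]; field_simp; ring, ENNReal.rpow_zero]
        rw [hc1, hx1, hZ2, one_mul, mul_one]
    · unfold Nt1
      calc (∑' n, ⨆ _ : Zd d, xf n ^ s * (Z ^ s)⁻¹)
          = ∑' n, xf n ^ s * (Z ^ s)⁻¹ := tsum_congr fun n => iSup_const
        _ = (∑' n, xf n ^ s) * (Z ^ s)⁻¹ := ENNReal.tsum_mul_right
        _ = Z ^ s * (Z ^ s)⁻¹ := by rw [hsum_xs]
        _ ≤ 1 := mul_inv_le_one' _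
    · unfold N1t
      refine iSup_le fun n => ?_
      rw [ENNReal.tsum_mul_right, hsum_cr n]
      exact mul_inv_le_one' _
    · unfold N11
      have inner : ∀ n, (∑' m, c m n ^ r * xf n ^ (s-r) * (Z ^ s)⁻¹)
          = xf n ^ s * (Z ^ s)⁻¹ := by
        intro n
        rw [ENNReal.tsum_mul_right, ENNReal.tsum_mul_right, hsum_cr n]
        by_cases hx : xf n = 0
        · rw [hx, ENNReal.zero_rpow_of_pos hr0, ENNReal.zero_rpow_of_pos hs0, zero_mul]
        · rw [← ENNReal.rpow_add _ _ hx (hxt n), show r + (s - r) = s from by ring]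
      calc (∑' n, ∑' m, c m n ^ r * xf n ^ (s-r) * (Z ^ s)⁻¹)
          = ∑' n, xf n ^ s * (Z ^ s)⁻¹ := tsum_congr inner
        _ = Z ^ s * (Z ^ s)⁻¹ := by rw [ENNReal.tsum_mul_right, hsum_xs]
        _ ≤ 1 := mul_inv_le_one' _
  obtain ⟨ua, ub, ud, haid, hNua, hNub, hNud⟩ := fact a X hX0 hXt rfl
  obtain ⟨va, vb, vd, hbid, hNva, hNvb, hNvd⟩ := fact b Y hY0 hYt rfl
  set one : Zd d → Zd d → ℝ≥0∞ := fun _ _ => (1:ℝ≥0∞) with hone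
  have point : ∀ m' n', opF k a b m' n'
      ≤ X * Y * ((opF k ua va m' n') ^ tA * (opF k ub vb m' n') ^ tB *
        (opF k one one m' n') ^ tC * (opF k ud vd m' n') ^ tD) :=
    pointwise_holder (k := k) (X := X) (Y := Y) a b ua ub one ud va vb one vd
      htA htB htC htD hsum
      (fun m n => by simp only [hone]; exact haid m n)
      (fun m n => by simp only [hone]; exact hbid m n)
  calc lpqE p q (opF k a b)
      ≤ lpqE p q (fun m' n' => X * Y * ((opF k ua va m' n') ^ tA * (opF k ub vb m' n') ^ tB *
          (opF k one one m' n') ^ tC * (opF k ud vd m' n') ^ tD)) := lpqE_mono point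
    _ = X * Y * lpqE p q (fun m' n' => (opF k ua va m' n') ^ tA * (opF k ub vb m' n') ^ tB *
          (opF k one one m' n') ^ tC * (opF k ud vd m' n') ^ tD) := lpqE_const_mul hp1 hq1
    _ ≤ X * Y * ((Nt1 (opF k ua va)) ^ tA * (N1t (opF k ub vb)) ^ tB *
          (Ntt (opF k one one)) ^ tC * (N11 (opF k ud vd)) ^ tD) :=
        mul_le_mul' le_rfl (assembly1 hp1 hpt hq1 hqt _ _ _ _ htA htB htC htD hmp hnq)
    _ ≤ X * Y * M := by
        refine mul_le_mul' le_rfl (four_pow_le ?_ ?_ ?_ ?_ htA htB htC htD hsum)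
        · exact (cornerA).trans (le_one_tri hA hNua hNva)
        · exact (cornerB).trans (le_one_tri hB hNub hNvb)
        · have h1 : Ntt (opF k one one) ≤ condC k * Ntt one * Ntt one :=
            iSup_le fun n' => iSup_le fun m' => cornerC m' n'
          exact h1.trans (le_one_tri hC Ntt_one Ntt_one)
        · exact (cornerD).trans (le_one_tri hD hNud hNvd)
    _ = M * X * Y := by ring


lemma core (a b : Zd d → Zd d → ℝ≥0∞) {M : ℝ≥0∞} (hM0 : M ≠ 0)
    (hA : condA k ≤ M) (hB : condB k ≤ M) (hC : condC k ≤ M) (hD : condD k ≤ M)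
    {p q : ℝ≥0∞} (hp : 1 ≤ p) (hq : 1 ≤ q) :
    lpqE p q (opF k a b) ≤ M * lpqE p q a * lpqE p q b := by
  by_cases hX0 : lpqE p q a = 0
  · have ha : ∀ m n, a m n = 0 := lpqE_eq_zero hp hq hX0
    have hop : opF k a b = fun _ _ => 0 := by
      funext m' n'
      unfold opF
      rw [ENNReal.tsum_eq_zero]
      intro z
      rw [ha z.1.1 z.1.2, mul_zero, zero_mul]
    rw [hop, lpqE_zero hp hq]
    exact zero_le
  by_cases hY0 : lpqE p q b = 0
  · have hb : ∀ m n, b m n = 0 := lpqE_eq_zero hp hq hY0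
    have hop : opF k a b = fun _ _ => 0 := by
      funext m' n'
      unfold opF
      rw [ENNReal.tsum_eq_zero]
      intro z
      rw [hb z.2.1 z.2.2, mul_zero]
    rw [hop, lpqE_zero hp hq]
    exact zero_le
  by_cases hXt : lpqE p q a = ⊤
  · rw [hXt, ENNReal.mul_top hM0, ENNReal.top_mul hY0]
    exact le_top
  by_cases hYt : lpqE p q b = ⊤
  · rw [hYt, ENNReal.mul_top (mul_ne_zero hM0 hX0)]
    exact le_top
  by_cases hpt : p = ⊤ <;> by_cases hqt : q = ⊤
  · subst hpt; subst hqt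
    exact core_case4 a b hC hX0 hXt hY0 hYt
  · subst hpt
    exact core_case2 hq hqt a b hA hC hX0 hXt hY0 hYt
  · subst hqt
    exact core_case3 hp hpt a b hB hC hX0 hXt hY0 hYt
  · exact core_case1 hp hpt hq hqt a b hA hB hC hD hX0 hXt hY0 hYt

lemma opF_nested (u v : Zd d → Zd d → ℝ≥0∞) (m' n' : Zd d) :
    opF k u v m' n'
      = ∑' m, ∑' n, ∑' m₀, ∑' n₀, k m' n' m n m₀ n₀ * u m n * v m₀ n₀ := by
  unfold opF
  calc (∑' z : Z2 d × Z2 d, k m' n' z.1.1 z.1.2 z.2.1 z.2.2 * u z.1.1 z.1.2 * v z.2.1 z.2.2)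
      = ∑' y : Z2 d, ∑' w : Z2 d, k m' n' y.1 y.2 w.1 w.2 * u y.1 y.2 * v w.1 w.2 :=
        ENNReal.tsum_prod'
    _ = ∑' m, ∑' n, ∑' w : Z2 d, k m' n' m n w.1 w.2 * u m n * v w.1 w.2 := tsum_pair _
    _ = ∑' m, ∑' n, ∑' m₀, ∑' n₀, k m' n' m n m₀ n₀ * u m n * v m₀ n₀ :=
        tsum_congr fun m => tsum_congr fun n => tsum_pair _

lemma enn_norm_tsum_le {ι : Type*} (f : ι → ℂ) :
    ENNReal.ofReal ‖∑' i, f i‖ ≤ ∑' i, ENNReal.ofReal ‖f i‖ := by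
  by_cases hf : Summable f
  · have hn : Summable fun i => ‖f i‖ := summable_norm_iff.mpr hf
    calc ENNReal.ofReal ‖∑' i, f i‖ ≤ ENNReal.ofReal (∑' i, ‖f i‖) :=
        ENNReal.ofReal_le_ofReal (norm_tsum_le_tsum_norm hn)
      _ = ∑' i, ENNReal.ofReal ‖f i‖ :=
        ENNReal.ofReal_tsum_of_nonneg (fun _ => norm_nonneg _) hn
  · rw [tsum_eq_zero_of_not_summable hf]
    simp

end BMX


end AuxiliaryHolder

theorem bilinear_matrix_lpq_bounded
    (d : ℕ) (hd : 1 ≤ d) (α β : ℝ) (hα : 0 < α) (hβ : 0 < β)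
    (K : Zd d → Zd d → Zd d → Zd d → Zd d → Zd d → ℂ)
    -- (a) `K ∈ ℓ^∞_n ℓ^∞_{n₀} ℓ¹_{n'} ℓ^∞_{m'} ℓ¹_m ℓ¹_{m₀}` :
    (hKa : (⨆ n : Zd d, ⨆ n₀ : Zd d, ∑' n' : Zd d, ⨆ m' : Zd d,
        ∑' m : Zd d, ∑' m₀ : Zd d, ENNReal.ofReal ‖K m' n' m n m₀ n₀‖) < ⊤)
    -- (b) `K ∈ ℓ^∞_{n'} ℓ¹_n ℓ¹_{n₀} ℓ^∞_m ℓ^∞_{m₀} ℓ¹_{m'}` :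
    (hKb : (⨆ n' : Zd d, ∑' n : Zd d, ∑' n₀ : Zd d, ⨆ m : Zd d, ⨆ m₀ : Zd d,
        ∑' m' : Zd d, ENNReal.ofReal ‖K m' n' m n m₀ n₀‖) < ⊤)
    -- (c) `K ∈ ℓ^∞_{n'} ℓ^∞_{m'} ℓ¹_n ℓ¹_m ℓ¹_{n₀} ℓ¹_{m₀}` :
    (hKc : (⨆ n' : Zd d, ⨆ m' : Zd d, ∑' n : Zd d, ∑' m : Zd d,
        ∑' n₀ : Zd d, ∑' m₀ : Zd d, ENNReal.ofReal ‖K m' n' m n m₀ n₀‖) < ⊤)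
    -- (d) `K ∈ ℓ^∞_n ℓ^∞_m ℓ^∞_{n₀} ℓ^∞_{m₀} ℓ¹_{n'} ℓ¹_{m'}` :
    (hKd : (⨆ n : Zd d, ⨆ m : Zd d, ⨆ n₀ : Zd d, ⨆ m₀ : Zd d,
        ∑' n' : Zd d, ∑' m' : Zd d, ENNReal.ofReal ‖K m' n' m n m₀ n₀‖) < ⊤) :
    ∃ C > 0, ∀ p q : ℝ≥0∞, 1 ≤ p → 1 ≤ q → ∀ c e : Zd d → Zd d → ℂ,
      lpq p q (fun m' n' => ∑' m : Zd d, ∑' n : Zd d, ∑' m₀ : Zd d, ∑' n₀ : Zd d,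
          K m' n' m n m₀ n₀ * c m n * e m₀ n₀)
        ≤ ENNReal.ofReal C * lpq p q c * lpq p q e := by
  classical
  have hAne : BMX.condA (fun m' n' m n m₀ n₀ => ENNReal.ofReal ‖K m' n' m n m₀ n₀‖) ≠ ⊤ :=
    hKa.ne
  have hBne : BMX.condB (fun m' n' m n m₀ n₀ => ENNReal.ofReal ‖K m' n' m n m₀ n₀‖) ≠ ⊤ :=
    hKb.ne
  have hCne : BMX.condC (fun m' n' m n m₀ n₀ => ENNReal.ofReal ‖K m' n' m n m₀ n₀‖) ≠ ⊤ :=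
    hKc.ne
  have hDne : BMX.condD (fun m' n' m n m₀ n₀ => ENNReal.ofReal ‖K m' n' m n m₀ n₀‖) ≠ ⊤ :=
    hKd.ne
  set CA := (BMX.condA (fun m' n' m n m₀ n₀ => ENNReal.ofReal ‖K m' n' m n m₀ n₀‖)).toReal
  set CB := (BMX.condB (fun m' n' m n m₀ n₀ => ENNReal.ofReal ‖K m' n' m n m₀ n₀‖)).toReal
  set CC := (BMX.condC (fun m' n' m n m₀ n₀ => ENNReal.ofReal ‖K m' n' m n m₀ n₀‖)).toReal
  set CD := (BMX.condD (fun m' n' m n m₀ n₀ => ENNReal.ofReal ‖K m' n' m n m₀ n₀‖)).toReal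
  have hCA : 0 ≤ CA := ENNReal.toReal_nonneg
  have hCB : 0 ≤ CB := ENNReal.toReal_nonneg
  have hCC : 0 ≤ CC := ENNReal.toReal_nonneg
  have hCD : 0 ≤ CD := ENNReal.toReal_nonneg
  refine ⟨CA + CB + CC + CD + 1, by linarith, ?_⟩
  intro p q hp hq c e
  have hM0 : (ENNReal.ofReal (CA + CB + CC + CD + 1)) ≠ 0 :=
    (ENNReal.ofReal_pos.mpr (by linarith)).ne'
  have hAM : BMX.condA (fun m' n' m n m₀ n₀ => ENNReal.ofReal ‖K m' n' m n m₀ n₀‖)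
      ≤ ENNReal.ofReal (CA + CB + CC + CD + 1) := by
    rw [← ENNReal.ofReal_toReal hAne]
    exact ENNReal.ofReal_le_ofReal (by linarith)
  have hBM : BMX.condB (fun m' n' m n m₀ n₀ => ENNReal.ofReal ‖K m' n' m n m₀ n₀‖)
      ≤ ENNReal.ofReal (CA + CB + CC + CD + 1) := by
    rw [← ENNReal.ofReal_toReal hBne]
    exact ENNReal.ofReal_le_ofReal (by linarith)
  have hCM : BMX.condC (fun m' n' m n m₀ n₀ => ENNReal.ofReal ‖K m' n' m n m₀ n₀‖)
      ≤ ENNReal.ofReal (CA + CB + CC + CD + 1) := by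
    rw [← ENNReal.ofReal_toReal hCne]
    exact ENNReal.ofReal_le_ofReal (by linarith)
  have hDM : BMX.condD (fun m' n' m n m₀ n₀ => ENNReal.ofReal ‖K m' n' m n m₀ n₀‖)
      ≤ ENNReal.ofReal (CA + CB + CC + CD + 1) := by
    rw [← ENNReal.ofReal_toReal hDne]
    exact ENNReal.ofReal_le_ofReal (by linarith)
  have point : ∀ m' n' : Zd d,
      ENNReal.ofReal ‖∑' m : Zd d, ∑' n : Zd d, ∑' m₀ : Zd d, ∑' n₀ : Zd d,
          K m' n' m n m₀ n₀ * c m n * e m₀ n₀‖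
      ≤ BMX.opF (fun m' n' m n m₀ n₀ => ENNReal.ofReal ‖K m' n' m n m₀ n₀‖)
          (fun m n => ENNReal.ofReal ‖c m n‖) (fun m n => ENNReal.ofReal ‖e m n‖) m' n' := by
    intro m' n'
    rw [BMX.opF_nested]
    have base : ∀ m n m₀ n₀ : Zd d, ENNReal.ofReal ‖K m' n' m n m₀ n₀ * c m n * e m₀ n₀‖
        = ENNReal.ofReal ‖K m' n' m n m₀ n₀‖ * ENNReal.ofReal ‖c m n‖
          * ENNReal.ofReal ‖e m₀ n₀‖ := by
      intro m n m₀ n₀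
      rw [norm_mul, norm_mul, ENNReal.ofReal_mul (by positivity),
        ENNReal.ofReal_mul (norm_nonneg _)]
    calc ENNReal.ofReal ‖∑' m : Zd d, ∑' n : Zd d, ∑' m₀ : Zd d, ∑' n₀ : Zd d,
          K m' n' m n m₀ n₀ * c m n * e m₀ n₀‖
        ≤ ∑' m : Zd d, ENNReal.ofReal ‖∑' n : Zd d, ∑' m₀ : Zd d, ∑' n₀ : Zd d,
            K m' n' m n m₀ n₀ * c m n * e m₀ n₀‖ := BMX.enn_norm_tsum_le _
      _ ≤ ∑' m : Zd d, ∑' n : Zd d, ENNReal.ofReal ‖∑' m₀ : Zd d, ∑' n₀ : Zd d,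
            K m' n' m n m₀ n₀ * c m n * e m₀ n₀‖ :=
          ENNReal.tsum_le_tsum fun m => BMX.enn_norm_tsum_le _
      _ ≤ ∑' m : Zd d, ∑' n : Zd d, ∑' m₀ : Zd d, ENNReal.ofReal ‖∑' n₀ : Zd d,
            K m' n' m n m₀ n₀ * c m n * e m₀ n₀‖ :=
          ENNReal.tsum_le_tsum fun m => ENNReal.tsum_le_tsum fun n => BMX.enn_norm_tsum_le _
      _ ≤ ∑' m : Zd d, ∑' n : Zd d, ∑' m₀ : Zd d, ∑' n₀ : Zd d, ENNReal.ofReal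
            ‖K m' n' m n m₀ n₀ * c m n * e m₀ n₀‖ :=
          ENNReal.tsum_le_tsum fun m => ENNReal.tsum_le_tsum fun n =>
            ENNReal.tsum_le_tsum fun m₀ => BMX.enn_norm_tsum_le _
      _ = ∑' m : Zd d, ∑' n : Zd d, ∑' m₀ : Zd d, ∑' n₀ : Zd d,
            ENNReal.ofReal ‖K m' n' m n m₀ n₀‖ * ENNReal.ofReal ‖c m n‖
              * ENNReal.ofReal ‖e m₀ n₀‖ := by
          exact tsum_congr fun m => tsum_congr fun n => tsum_congr fun m₀ =>
            tsum_congr fun n₀ => base m n m₀ n₀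
  calc lpq p q (fun m' n' => ∑' m : Zd d, ∑' n : Zd d, ∑' m₀ : Zd d, ∑' n₀ : Zd d,
          K m' n' m n m₀ n₀ * c m n * e m₀ n₀)
      ≤ BMX.lpqE p q (BMX.opF (fun m' n' m n m₀ n₀ => ENNReal.ofReal ‖K m' n' m n m₀ n₀‖)
          (fun m n => ENNReal.ofReal ‖c m n‖) (fun m n => ENNReal.ofReal ‖e m n‖)) :=
        BMX.lpqE_mono point
    _ ≤ ENNReal.ofReal (CA + CB + CC + CD + 1)
          * BMX.lpqE p q (fun m n => ENNReal.ofReal ‖c m n‖)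
          * BMX.lpqE p q (fun m n => ENNReal.ofReal ‖e m n‖) :=
        BMX.core _ _ hM0 hAM hBM hCM hDM hp hq
    _ = ENNReal.ofReal (CA + CB + CC + CD + 1) * lpq p q c * lpq p q e := rfl
end
end
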